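/- arXiv:1110.2540 — 5 statements merged into one kernel-verified Lean document; each statement's English description precedes it below -/
import Mathlib

section
/- Let μ be a finite complex Borel measure on ℝ with all finite moments (∫|t|^n d|μ|(t) < ∞ for all n) that annihilates all polynomials (∫ t^n dμ(t) = 0 for all n ≥ 0). Then for every n > 0, the Cauchy integral Kμ(iy) = (1/π)∫ (t - iy)⁻¹ dμ(t) satisfies Kμ(iy) = o(y^{-n}) as y → ∞. -/
open MeasureTheory Filter Asymptotics Topology

/-- If a finite complex measure `f dμ` on ℝ has all finite moments and
annihilates all polynomials, then its Cauchy integral `Kμ(iy)` is `o(y^{-n})` as `y → ∞`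
for every `n > 0`. -/
theorem cauchy_transform_superpolynomial_decay_of_annihilates
    (μ : Measure ℝ) [IsFiniteMeasure μ] (f : ℝ → ℂ)
    (hf : AEStronglyMeasurable f μ)
    (hmom : ∀ n : ℕ, Integrable (fun t => |t| ^ n * ‖f t‖) μ)
    (hann : ∀ n : ℕ, ∫ t, (t : ℂ) ^ n * f t ∂μ = 0) :
    ∀ n : ℕ, 0 < n →
      (fun y : ℝ => (1 / (Real.pi : ℂ)) * ∫ t, ((t : ℂ) - Complex.I * y)⁻¹ * f t ∂μ)
        =o[atTop] fun y : ℝ => y ^ (-(n : ℝ)) := by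
  intro n hn
  set C : ℝ := ∫ t, |t| ^ n * ‖f t‖ ∂μ with hC
  have hC0 : 0 ≤ C := integral_nonneg fun t => by positivity
  -- main pointwise bound
  have key : ∀ y : ℝ, 0 < y →
      ‖∫ t, ((t : ℂ) - Complex.I * y)⁻¹ * f t ∂μ‖ ≤ C * ((y ^ n)⁻¹ * y⁻¹) := by
    intro y hy
    set z : ℂ := Complex.I * y with hzdef
    have hzim : ∀ t : ℝ, ((t : ℂ) - z).im = -y := by
      intro t; simp [hzdef]
    have hzt : ∀ t : ℝ, (t : ℂ) - z ≠ 0 := by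
      intro t h
      have := hzim t
      rw [h] at this
      simp at this
      linarith
    have hz : z ≠ 0 := by
      intro h
      have := hzt 0
      simp [h] at this
    have habs : ∀ t : ℝ, y ≤ ‖(t : ℂ) - z‖ := by
      intro t
      have h1 := Complex.abs_im_le_norm ((t : ℂ) - z)
      rw [hzim t] at h1
      rw [abs_neg, abs_of_pos hy] at h1
      exact h1
    have hinv : ∀ t : ℝ, ‖((t : ℂ) - z)⁻¹‖ ≤ y⁻¹ := by
      intro t
      rw [norm_inv]
      exact inv_anti₀ hy (habs t)
    have hcont : Continuous fun t : ℝ => ((t : ℂ) - z)⁻¹ :=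
      Continuous.inv₀ (by continuity) hzt
    -- integrability
    have hint : ∀ m : ℕ, Integrable (fun t : ℝ => (t : ℂ) ^ m * (((t : ℂ) - z)⁻¹ * f t)) μ := by
      intro m
      refine Integrable.mono' (((hmom m).const_mul y⁻¹))
        ((Continuous.aestronglyMeasurable (by continuity)).mul
          (hcont.aestronglyMeasurable.mul hf)) ?_
      filter_upwards with t
      rw [norm_mul, norm_mul]
      calc ‖(t : ℂ) ^ m‖ * (‖((t : ℂ) - z)⁻¹‖ * ‖f t‖)
          ≤ ‖(t : ℂ) ^ m‖ * (y⁻¹ * ‖f t‖) := by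
            gcongr; exact hinv t
        _ = y⁻¹ * (|t| ^ m * ‖f t‖) := by
            rw [norm_pow, Complex.norm_real]
            simp only [Real.norm_eq_abs]
            ring
    have hintf : ∀ m : ℕ, Integrable (fun t : ℝ => (t : ℂ) ^ m * f t) μ := by
      intro m
      refine Integrable.mono' (hmom m)
        ((Continuous.aestronglyMeasurable (by continuity)).mul hf) ?_
      filter_upwards with t
      rw [norm_mul, norm_pow, Complex.norm_real]
      simp
    -- the induction
    have hG : ∀ m : ℕ, (∫ t, ((t : ℂ) - z)⁻¹ * f t ∂μ)
        = z⁻¹ ^ m * ∫ t, (t : ℂ) ^ m * (((t : ℂ) - z)⁻¹ * f t) ∂μ := by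
      intro m
      induction m with
      | zero => simp
      | succ m ih =>
        have hpt : ∀ t : ℝ, (t : ℂ) ^ (m + 1) * (((t : ℂ) - z)⁻¹ * f t)
            = (t : ℂ) ^ m * f t + z * ((t : ℂ) ^ m * (((t : ℂ) - z)⁻¹ * f t)) := by
          intro t
          field_simp [hzt t]
          ring
        have step : (∫ t, (t : ℂ) ^ (m + 1) * (((t : ℂ) - z)⁻¹ * f t) ∂μ)
            = z * ∫ t, (t : ℂ) ^ m * (((t : ℂ) - z)⁻¹ * f t) ∂μ := by
          simp only [hpt]
          rw [integral_add (hintf m) ((hint m).const_mul z), hann m, integral_const_mul]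
          simp
        rw [ih, step]
        rw [pow_succ, mul_assoc, inv_mul_cancel_left₀ hz]
    have hGn := hG n
    rw [hGn]
    rw [norm_mul, norm_pow, norm_inv]
    have hnz : ‖z‖ = y := by
      simp [hzdef, abs_of_pos hy]
    rw [hnz]
    have hGbound : ‖∫ t, (t : ℂ) ^ n * (((t : ℂ) - z)⁻¹ * f t) ∂μ‖ ≤ y⁻¹ * C := by
      calc ‖∫ t, (t : ℂ) ^ n * (((t : ℂ) - z)⁻¹ * f t) ∂μ‖
          ≤ ∫ t, ‖(t : ℂ) ^ n * (((t : ℂ) - z)⁻¹ * f t)‖ ∂μ :=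
            norm_integral_le_integral_norm _
        _ ≤ ∫ t, y⁻¹ * (|t| ^ n * ‖f t‖) ∂μ := by
            refine integral_mono (hint n).norm ((hmom n).const_mul y⁻¹) fun t => ?_
            rw [norm_mul, norm_mul, norm_pow, Complex.norm_real]
            calc ‖(t : ℝ)‖ ^ n * (‖((t : ℂ) - z)⁻¹‖ * ‖f t‖)
                ≤ ‖(t : ℝ)‖ ^ n * (y⁻¹ * ‖f t‖) := by gcongr; exact hinv t
              _ = y⁻¹ * (|t| ^ n * ‖f t‖) := by
                  simp only [Real.norm_eq_abs]; ring
        _ = y⁻¹ * C := integral_const_mul _ _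
    calc y⁻¹ ^ n * ‖∫ t, (t : ℂ) ^ n * (((t : ℂ) - z)⁻¹ * f t) ∂μ‖
        ≤ y⁻¹ ^ n * (y⁻¹ * C) := by gcongr
      _ = C * ((y ^ n)⁻¹ * y⁻¹) := by
          rw [inv_pow]
          ring
  -- asymptotics
  have h1 : (fun y : ℝ => (1 / (Real.pi : ℂ)) * ∫ t, ((t : ℂ) - Complex.I * y)⁻¹ * f t ∂μ)
      =O[atTop] fun y : ℝ => y ^ (-(n : ℝ)) * y⁻¹ := by
    refine IsBigO.of_bound (‖(1 / (Real.pi : ℂ))‖ * C) ?_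
    filter_upwards [eventually_ge_atTop (1 : ℝ)] with y hy
    have hy0 : 0 < y := lt_of_lt_of_le one_pos hy
    rw [norm_mul]
    have : ‖(y : ℝ) ^ (-(n : ℝ)) * y⁻¹‖ = (y ^ n)⁻¹ * y⁻¹ := by
      rw [Real.norm_eq_abs, abs_of_nonneg (by positivity), Real.rpow_neg hy0.le,
        Real.rpow_natCast]
    rw [this, mul_assoc]
    exact mul_le_mul_of_nonneg_left (key y hy0) (norm_nonneg _)
  have h2 : (fun y : ℝ => y ^ (-(n : ℝ)) * y⁻¹) =o[atTop]
      fun y : ℝ => y ^ (-(n : ℝ)) * 1 :=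
    (isBigO_refl _ _).mul_isLittleO ((isLittleO_one_iff ℝ).mpr tendsto_inv_atTop_zero)
  refine h1.trans_isLittleO (h2.congr_right fun y => mul_one _)
end

section
/- Let μ be a finite real Borel measure on ℝ with all finite moments such that its Cauchy integral satisfies Kμ(iy) = o(y^{-n}) as y → +∞ for every n > 0. Then μ annihilates all polynomials: ∫ t^n dμ(t) = 0 for all n ≥ 0. (Key step: the entire function H(z) = ∫ (t^n − z^n)/(t − z) dμ(t) is of exponential type zero, bounded on the imaginary axis, and tends to zero along it, hence H ≡ 0.) -/
open MeasureTheory Filter Asymptotics Topology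

private lemma key_geom (w z : ℂ) (hz : z ≠ 0) (hwz : w - z ≠ 0) (n : ℕ) :
    (w - z)⁻¹ = -(∑ k ∈ Finset.range (n+1), w^k / z^(k+1)) + w^(n+1) / z^(n+1) * (w - z)⁻¹ := by
  induction n with
  | zero => rw [Finset.sum_range_one]; field_simp; ring
  | succ n ih =>
    have haux : -(w ^ (n+1) / z ^ (n+1+1)) + w ^ (n+1+1) / z ^ (n+1+1) * (w - z)⁻¹
        = w^(n+1)/z^(n+1) * (w - z)⁻¹ := by field_simp; ring
    rw [Finset.sum_range_succ, neg_add, add_assoc, haux]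
    exact ih

/-- If a finite real measure `f dμ` on ℝ has all finite moments and its Cauchy
integral `Kμ(iy)` is `o(y^{-n})` as `y → +∞` for every `n > 0`, then the measure annihilates
all polynomials. -/
theorem annihilates_of_cauchy_transform_superpolynomial_decay
    (μ : Measure ℝ) [IsFiniteMeasure μ] (f : ℝ → ℝ)
    (hf : AEStronglyMeasurable f μ)
    (hmom : ∀ n : ℕ, Integrable (fun t => |t| ^ n * |f t|) μ)
    (hdecay : ∀ n : ℕ, 0 < n →
      (fun y : ℝ => (1 / (Real.pi : ℂ)) * ∫ t, ((t : ℂ) - Complex.I * y)⁻¹ * (f t : ℂ) ∂μ)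
        =o[atTop] fun y : ℝ => y ^ (-(n : ℝ))) :
    ∀ n : ℕ, ∫ t, t ^ n * f t ∂μ = 0 := by
  have hfC : AEStronglyMeasurable (fun t => (f t : ℂ)) μ :=
    Complex.continuous_ofReal.comp_aestronglyMeasurable hf
  have hIntPow : ∀ k : ℕ, Integrable (fun t : ℝ => (t:ℂ)^k * (f t : ℂ)) μ := by
    intro k
    refine (hmom k).mono'
      (((Complex.measurable_ofReal.pow_const k).aestronglyMeasurable).mul hfC) ?_
    filter_upwards with t
    simp [norm_mul, norm_pow, Complex.norm_real, Real.norm_eq_abs]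
  have hreal : ∀ k : ℕ, (∫ t, (t:ℂ)^k * (f t : ℂ) ∂μ) = ((∫ t, t^k * f t ∂μ : ℝ) : ℂ) := by
    intro k
    calc ∫ t, (t:ℂ)^k * (f t : ℂ) ∂μ = ∫ t, ((t^k * f t : ℝ) : ℂ) ∂μ :=
          integral_congr_ae (ae_of_all _ fun t => by push_cast; ring)
      _ = ((∫ t, t^k * f t ∂μ : ℝ) : ℂ) := integral_ofReal
  have hker_norm : ∀ {y : ℝ}, 0 < y → ∀ t : ℝ, ‖((t:ℂ) - Complex.I*y)⁻¹‖ ≤ y⁻¹ := by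
    intro y hy t
    have h1 : (y:ℝ) ≤ ‖(t:ℂ) - Complex.I*y‖ := by
      have him : ((t:ℂ) - Complex.I*y).im = -y := by simp
      calc y = |((t:ℂ) - Complex.I*y).im| := by rw [him, abs_neg, abs_of_pos hy]
        _ ≤ ‖(t:ℂ) - Complex.I*y‖ := by
            exact Complex.abs_im_le_norm _
    rw [norm_inv]
    exact inv_anti₀ hy h1
  have hwz : ∀ {y : ℝ}, 0 < y → ∀ t : ℝ, (t:ℂ) - Complex.I*y ≠ 0 := by
    intro y hy t h
    have := congrArg Complex.im h
    simp at this
    exact hy.ne' this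
  have hIntKer : ∀ (j : ℕ) {y : ℝ}, 0 < y →
      Integrable (fun t : ℝ => (t:ℂ)^j * ((t:ℂ) - Complex.I*y)⁻¹ * (f t : ℂ)) μ := by
    intro j y hy
    refine ((hmom j).mul_const y⁻¹).mono'
      ((((Complex.measurable_ofReal.pow_const j).mul
        ((Complex.measurable_ofReal.sub measurable_const).inv)).aestronglyMeasurable).mul hfC) ?_
    filter_upwards with t
    have h2 := hker_norm hy t
    calc ‖(t:ℂ)^j * ((t:ℂ) - Complex.I*y)⁻¹ * (f t : ℂ)‖
        = |t|^j * ‖((t:ℂ) - Complex.I*y)⁻¹‖ * |f t| := by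
          simp [norm_mul, norm_pow, Complex.norm_real, Real.norm_eq_abs]
      _ ≤ |t|^j * y⁻¹ * |f t| := by gcongr
      _ = |t|^j * |f t| * y⁻¹ := by ring
  intro n
  induction n using Nat.strong_induction_on with
  | _ n ih =>
    set M : ℝ := ∫ t, t^n * f t ∂μ with hM
    have hkey : ∀ᶠ y : ℝ in atTop,
        (Complex.I*y)^(n+1) * ∫ t, ((t:ℂ) - Complex.I*y)⁻¹ * (f t : ℂ) ∂μ
        = -(M:ℂ) + ∫ t, (t:ℂ)^(n+1) * ((t:ℂ) - Complex.I*y)⁻¹ * (f t : ℂ) ∂μ := by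
      filter_upwards [eventually_gt_atTop 0] with y hy
      have hz : (Complex.I * (y:ℂ)) ≠ 0 := by
        simp [Complex.I_ne_zero, Complex.ofReal_ne_zero, hy.ne']
      have hzpow : (Complex.I * (y:ℂ))^(n+1) ≠ 0 := pow_ne_zero _ hz
      have hpt : ∀ t : ℝ, ((t:ℂ) - Complex.I*y)⁻¹ * (f t : ℂ)
          = -(∑ k ∈ Finset.range (n+1), (1/(Complex.I*(y:ℂ))^(k+1)) * ((t:ℂ)^k * f t))
            + (1/(Complex.I*(y:ℂ))^(n+1))
              * ((t:ℂ)^(n+1) * ((t:ℂ) - Complex.I*y)⁻¹ * f t) := by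
        intro t
        have hg := key_geom (t:ℂ) (Complex.I*(y:ℂ)) hz (hwz hy t) n
        conv_lhs => rw [hg]
        rw [add_mul, neg_mul, Finset.sum_mul]
        congr 1
        · congr 1
          exact Finset.sum_congr rfl fun k _ => by ring
        · ring
      have hsplit : ∫ t, ((t:ℂ) - Complex.I*y)⁻¹ * (f t : ℂ) ∂μ
          = -(∑ k ∈ Finset.range (n+1),
              (1/(Complex.I*(y:ℂ))^(k+1)) * ∫ t, (t:ℂ)^k * (f t : ℂ) ∂μ)
            + (1/(Complex.I*(y:ℂ))^(n+1))
              * ∫ t, (t:ℂ)^(n+1) * ((t:ℂ) - Complex.I*y)⁻¹ * (f t : ℂ) ∂μ := by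
        rw [integral_congr_ae (ae_of_all _ hpt), integral_add, integral_neg,
          integral_finset_sum]
        · simp_rw [integral_const_mul]
        · exact fun k _ => (hIntPow k).const_mul _
        · exact (integrable_finset_sum _ fun k _ => (hIntPow k).const_mul _).neg
        · exact (hIntKer (n+1) hy).const_mul _
      have hsum0 : ∑ k ∈ Finset.range n,
          (1/(Complex.I*(y:ℂ))^(k+1)) * ∫ t, (t:ℂ)^k * (f t : ℂ) ∂μ = 0 := by
        refine Finset.sum_eq_zero fun k hk => ?_
        rw [hreal k, ih k (Finset.mem_range.mp hk)]
        simp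
      rw [hsplit, Finset.sum_range_succ, hsum0, zero_add, hreal n, ← hM]
      field_simp
    have hRlim : Tendsto
        (fun y : ℝ => ∫ t, (t:ℂ)^(n+1) * ((t:ℂ) - Complex.I*y)⁻¹ * (f t : ℂ) ∂μ)
        atTop (𝓝 0) := by
      refine squeeze_zero_norm' ?_
        (by simpa using tendsto_inv_atTop_zero.const_mul (∫ t, |t|^(n+1) * |f t| ∂μ))
      filter_upwards [eventually_gt_atTop 0] with y hy
      calc ‖∫ t, (t:ℂ)^(n+1) * ((t:ℂ) - Complex.I*y)⁻¹ * (f t : ℂ) ∂μ‖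
          ≤ ∫ t, ‖(t:ℂ)^(n+1) * ((t:ℂ) - Complex.I*y)⁻¹ * (f t : ℂ)‖ ∂μ :=
            norm_integral_le_integral_norm _
        _ ≤ ∫ t, |t|^(n+1) * |f t| * y⁻¹ ∂μ := by
            refine integral_mono ((hIntKer (n+1) hy).norm) ((hmom (n+1)).mul_const _) ?_
            intro t
            have h2 := hker_norm hy t
            calc ‖(t:ℂ)^(n+1) * ((t:ℂ) - Complex.I*y)⁻¹ * (f t : ℂ)‖
                = |t|^(n+1) * ‖((t:ℂ) - Complex.I*y)⁻¹‖ * |f t| := by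
                  simp [norm_mul, norm_pow, Complex.norm_real, Real.norm_eq_abs]
              _ ≤ |t|^(n+1) * y⁻¹ * |f t| := by gcongr
              _ = |t|^(n+1) * |f t| * y⁻¹ := by ring
        _ = (∫ t, |t|^(n+1) * |f t| ∂μ) * y⁻¹ := by rw [integral_mul_const]
    have hL : Tendsto
        (fun y : ℝ => (Complex.I*y)^(n+1) * ∫ t, ((t:ℂ) - Complex.I*y)⁻¹ * (f t : ℂ) ∂μ)
        atTop (𝓝 0) := by
      have h1 := hdecay (n+1) (Nat.succ_pos n)
      have h2 : (fun y : ℝ => ∫ t, ((t:ℂ) - Complex.I*y)⁻¹ * (f t : ℂ) ∂μ)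
          =o[atTop] fun y : ℝ => y ^ (-((n+1 : ℕ) : ℝ)) := by
        have h2' := h1.const_mul_left (Real.pi : ℂ)
        refine h2'.congr_left fun y => ?_
        have hπ : (Real.pi : ℂ) ≠ 0 := by
          exact_mod_cast Complex.ofReal_ne_zero.mpr Real.pi_ne_zero
        field_simp
      have h3 : (fun y : ℝ => (Complex.I*(y:ℂ))^(n+1)) =O[atTop]
          fun y : ℝ => y ^ (((n+1 : ℕ)) : ℝ) := by
        refine IsBigO.of_bound 1 ?_
        filter_upwards [eventually_ge_atTop 0] with y hy
        rw [one_mul, norm_pow, norm_mul, Complex.norm_I, one_mul, Complex.norm_real,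
          Real.norm_eq_abs, Real.norm_eq_abs, Real.rpow_natCast, abs_pow]
      have h4 := h3.mul_isLittleO h2
      have h5 : (fun y : ℝ => y ^ (((n+1 : ℕ)) : ℝ) * y ^ (-((n+1 : ℕ) : ℝ)))
          =ᶠ[atTop] fun _ => (1:ℝ) := by
        filter_upwards [eventually_gt_atTop 0] with y hy
        have hz0 : (((n+1 : ℕ)) : ℝ) + -((n+1 : ℕ) : ℝ) = 0 := by ring
        rw [← Real.rpow_add hy, hz0, Real.rpow_zero]
      have h6 := h4.congr' EventuallyEq.rfl h5
      exact (isLittleO_one_iff _).mp h6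
    have h7 : Tendsto
        (fun y : ℝ => -(M:ℂ) + ∫ t, (t:ℂ)^(n+1) * ((t:ℂ) - Complex.I*y)⁻¹ * (f t : ℂ) ∂μ)
        atTop (𝓝 (-(M:ℂ))) := by
      simpa using tendsto_const_nhds.add hRlim
    have h8 := tendsto_nhds_unique (hL.congr' hkey) h7
    have : ((M:ℝ):ℂ) = 0 := by
      rw [← neg_eq_zero]; exact h8.symm
    exact_mod_cast this
end

section
/- Let 0 < p < ∞ and let μ be a positive finite measure on ℝ such that all polynomials belong to L^p(μ). If there exists a lower semicontinuous weight W : ℝ → [1,∞] with x^n = o(W(x)) as |x| → ∞ for every n, and a finite positive measure ν with μ = W^{−p} ν, such that polynomials are dense in C_W, then polynomials are dense in L^p(μ). -/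
open MeasureTheory Filter Topology
open scoped ENNReal

/-- A weight: lower semicontinuous `W : ℝ → [1,∞]` with `xⁿ = o(W)` as `|x| → ∞`. -/
def IsWeight (W : ℝ → ℝ≥0∞) : Prop :=
  LowerSemicontinuous W ∧ (∀ x, 1 ≤ W x) ∧
    ∀ n : ℕ, Tendsto (fun x : ℝ => ENNReal.ofReal (|x| ^ n) / W x) (atBot ⊔ atTop) (𝓝 0)

/-- Membership in `C_W`: continuous `f` with `f/W → 0` at `±∞`. -/
def MemCW (W : ℝ → ℝ≥0∞) (f : ℝ → ℝ) : Prop :=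
  Continuous f ∧ Tendsto (fun x => ENNReal.ofReal |f x| / W x) (atBot ⊔ atTop) (𝓝 0)

/-- Density of polynomials in `C_W` w.r.t. the seminorm `sup |f|/W`. -/
def PolyDenseCW (W : ℝ → ℝ≥0∞) : Prop :=
  ∀ f : ℝ → ℝ, MemCW W f → ∀ ε : ℝ, 0 < ε →
    ∃ s : Polynomial ℝ, ∀ x, ENNReal.ofReal |f x - s.eval x| ≤ ENNReal.ofReal ε * W x

/-- Bakan, easy direction: if `μ = W^{-p} ν` for a weight `W` with polynomials
dense in `C_W`, then polynomials are dense in `Lᵖ(μ)`. -/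
theorem polyDense_Lp_of_polyDense_CW
    (p : ℝ) (hp : 0 < p) (μ ν : Measure ℝ) [IsFiniteMeasure μ] [IsFiniteMeasure ν]
    (hpoly : ∀ s : Polynomial ℝ, MemLp s.eval (ENNReal.ofReal p) μ)
    (W : ℝ → ℝ≥0∞) (hW : IsWeight W)
    (hμν : μ = ν.withDensity fun x => W x ^ (-p))
    (hdense : PolyDenseCW W) :
    ∀ f : ℝ → ℝ, MemLp f (ENNReal.ofReal p) μ → ∀ ε : ℝ, 0 < ε →
      ∃ s : Polynomial ℝ,
        eLpNorm (fun x => f x - s.eval x) (ENNReal.ofReal p) μ < ENNReal.ofReal ε := by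
  intro f hf ε hε
  set q : ℝ≥0∞ := ENNReal.ofReal p with hq
  have hq0 : q ≠ 0 := by simp [hq, ENNReal.ofReal_eq_zero, not_le, hp]
  have hqtop : q ≠ ∞ := ENNReal.ofReal_ne_top
  have hqto : q.toReal = p := ENNReal.toReal_ofReal hp.le
  set C : ℝ≥0∞ := ENNReal.LpAddConst q with hC
  have hCtop : C ≠ ∞ := (ENNReal.LpAddConst_lt_top q).ne
  have hC0 : C ≠ 0 := by
    rw [hC, ENNReal.LpAddConst]
    split <;> simp [ENNReal.rpow_eq_zero_iff]
  -- choose η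
  set η : ℝ≥0∞ := ENNReal.ofReal (ε / 2) / (2 * C) with hη
  have hη0 : η ≠ 0 := by
    rw [hη]
    simp only [ne_eq, ENNReal.div_eq_zero_iff, not_or]
    constructor
    · simp [ENNReal.ofReal_eq_zero, not_le]; linarith
    · exact ENNReal.mul_ne_top (by simp) hCtop
  have hηtop : η ≠ ∞ := by
    rw [hη]
    exact (ENNReal.div_lt_top (by simp) (by simp [hC0])).ne
  have hCη : C * (η + η) = ENNReal.ofReal (ε / 2) := by
    rw [hη, ← two_mul, ← mul_assoc, mul_comm C 2]
    exact ENNReal.mul_div_cancel (by simp [hC0]) (ENNReal.mul_ne_top (by simp) hCtop)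
  -- approximate by continuous compactly supported g
  obtain ⟨g, hgsupp, hgapprox, hgcont, hgmem⟩ :=
    hf.exists_hasCompactSupport_eLpNorm_sub_le hqtop hη0
  -- g belongs to C_W
  have hgCW : MemCW W g := by
    refine ⟨hgcont, ?_⟩
    obtain ⟨R, hR⟩ := hgsupp.isBounded.subset_closedBall 0
    set R₀ : ℝ := max R 0 with hR₀
    have hR₀0 : 0 ≤ R₀ := le_max_right _ _
    have hz : ∀ x : ℝ, R₀ < |x| → g x = 0 := by
      intro x hx
      apply image_eq_zero_of_notMem_tsupport
      intro hmem
      have := hR hmem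
      rw [Metric.mem_closedBall, Real.dist_eq, sub_zero] at this
      have : |x| ≤ R₀ := this.trans (le_max_left _ _)
      linarith
    have hev : (fun x => ENNReal.ofReal |g x| / W x) =ᶠ[atBot ⊔ atTop] fun _ => 0 := by
      rw [EventuallyEq, eventually_sup]
      constructor
      · filter_upwards [eventually_lt_atBot (-R₀)] with x hx
        rw [hz x (by rw [abs_of_nonpos (by linarith)]; linarith)]
        simp
      · filter_upwards [eventually_gt_atTop R₀] with x hx
        rw [hz x (by rw [abs_of_pos (by linarith)]; exact hx)]
        simp
    exact Tendsto.congr' hev.symm tendsto_const_nhds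
  -- choose ε' for the sup-norm approximation
  set D : ℝ≥0∞ := (ν Set.univ) ^ (1 / p) with hD
  have hDtop : D ≠ ∞ :=
    (ENNReal.rpow_lt_top_of_nonneg (by positivity) (measure_ne_top ν _)).ne
  set ε' : ℝ := (η / (D + 1)).toReal with hε'
  have hε'top : η / (D + 1) ≠ ∞ :=
    (ENNReal.div_lt_top hηtop (by simp)).ne
  have hε'pos : 0 < ε' := by
    rw [hε']
    refine ENNReal.toReal_pos ?_ hε'top
    simp only [ne_eq, ENNReal.div_eq_zero_iff, not_or]
    exact ⟨hη0, by simp [hDtop]⟩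
  have hε'le : ENNReal.ofReal ε' * D ≤ η := by
    rw [hε', ENNReal.ofReal_toReal hε'top]
    calc η / (D + 1) * D ≤ η / (D + 1) * (D + 1) := by
          gcongr; exact le_self_add
      _ = η := ENNReal.div_mul_cancel (by simp) (by simp [hDtop])
  -- get the polynomial
  obtain ⟨s, hs⟩ := hdense g hgCW ε' hε'pos
  refine ⟨s, ?_⟩
  -- pointwise bound
  have hptwise : ∀ x, (‖g x - s.eval x‖₊ : ℝ≥0∞) ^ p * W x ^ (-p) ≤
      ENNReal.ofReal ε' ^ p := by
    intro x
    rcases eq_or_ne (W x) ∞ with hWx | hWx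
    · rw [hWx, ENNReal.top_rpow_of_neg (by linarith), mul_zero]
      exact zero_le
    · have hW1 : (1 : ℝ≥0∞) ≤ W x := hW.2.1 x
      have hW0 : W x ≠ 0 := by intro h; rw [h] at hW1; simp at hW1
      have h1 : (‖g x - s.eval x‖₊ : ℝ≥0∞) ≤ ENNReal.ofReal ε' * W x := by
        have := hs x
        rwa [← Real.norm_eq_abs, ofReal_norm] at this
      calc (‖g x - s.eval x‖₊ : ℝ≥0∞) ^ p * W x ^ (-p)
          ≤ (ENNReal.ofReal ε' * W x) ^ p * W x ^ (-p) := by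
            exact mul_le_mul_left (ENNReal.rpow_le_rpow h1 hp.le) _
        _ = ENNReal.ofReal ε' ^ p * (W x ^ p * W x ^ (-p)) := by
            rw [ENNReal.mul_rpow_of_nonneg _ _ hp.le, mul_assoc]
        _ = ENNReal.ofReal ε' ^ p := by
            rw [← ENNReal.rpow_add p (-p) hW0 hWx, add_neg_cancel, ENNReal.rpow_zero,
              mul_one]
  -- bound on eLpNorm (g - s)
  have hgs_meas : Measurable fun x => (‖g x - s.eval x‖₊ : ℝ≥0∞) ^ p :=
    ((hgcont.sub s.continuous).measurable.nnnorm.coe_nnreal_ennreal).pow_const p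
  have hkey : eLpNorm (fun x => g x - s.eval x) q μ ≤ ENNReal.ofReal ε' * D := by
    rw [eLpNorm_eq_lintegral_rpow_enorm_toReal hq0 hqtop, hqto]
    have hWmeas : Measurable fun x => W x ^ (-p) := hW.1.measurable.pow_const (-p)
    have hint : ∫⁻ x, (‖g x - s.eval x‖₊ : ℝ≥0∞) ^ p ∂μ ≤
        ENNReal.ofReal ε' ^ p * ν Set.univ := by
      rw [hμν, lintegral_withDensity_eq_lintegral_mul ν hWmeas hgs_meas]
      calc ∫⁻ x, W x ^ (-p) * (‖g x - s.eval x‖₊ : ℝ≥0∞) ^ p ∂ν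
          ≤ ∫⁻ _, ENNReal.ofReal ε' ^ p ∂ν := by
            refine lintegral_mono fun x => ?_
            rw [mul_comm]
            exact hptwise x
        _ = ENNReal.ofReal ε' ^ p * ν Set.univ := lintegral_const _
    calc (∫⁻ x, (‖g x - s.eval x‖₊ : ℝ≥0∞) ^ p ∂μ) ^ (1 / p)
        ≤ (ENNReal.ofReal ε' ^ p * ν Set.univ) ^ (1 / p) :=
          ENNReal.rpow_le_rpow hint (by positivity)
      _ = ENNReal.ofReal ε' * D := by
          rw [ENNReal.mul_rpow_of_nonneg _ _ (by positivity), ← ENNReal.rpow_mul,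
            mul_one_div_cancel hp.ne', ENNReal.rpow_one, hD]
  -- combine
  have hsplit : (fun x => f x - s.eval x) = (f - g) + fun x => g x - s.eval x := by
    funext x; simp only [Pi.add_apply, Pi.sub_apply]; ring
  rw [hsplit]
  calc eLpNorm ((f - g) + fun x => g x - s.eval x) q μ
      ≤ C * (eLpNorm (f - g) q μ + eLpNorm (fun x => g x - s.eval x) q μ) :=
        eLpNorm_add_le' (hf.aestronglyMeasurable.sub hgmem.aestronglyMeasurable)
          (hgcont.sub s.continuous).aestronglyMeasurable q
    _ ≤ C * (η + η) := by
        exact mul_le_mul_right (add_le_add hgapprox (hkey.trans hε'le)) C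
    _ = ENNReal.ofReal (ε / 2) := hCη
    _ < ENNReal.ofReal ε := by
        rw [ENNReal.ofReal_lt_ofReal_iff hε]
        linarith
end

section
/- Let ν ≠ 0 be a finite real measure on ℝ annihilating polynomials, and suppose ν is an extreme point of the set S = { σ real measure : ∫W d|σ| ≤ 1, supp σ ⊆ supp ν, σ ⊥ polynomials } (for a weight W with ∫W d|ν| ≤ 1). Then the set of real functions h ∈ L^∞(|ν|) with hν ⊥ polynomials is one-dimensional, i.e., every such h is |ν|-a.e. constant. -/
open MeasureTheory Filter Topology
open scoped ENNReal

set_option maxHeartbeats 1000000 in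
/-- Let `ν = g₀ dρ` (with `|g₀| = 1` a.e., `ρ = |ν|` finite nonzero) be a real
measure annihilating polynomials which is an extreme point of the set `S` of real measures
`σ = g dρ` with `∫ W d|σ| ≤ 1`, `supp σ ⊆ supp ν` and `σ ⊥ 𝒫`.  Then every real
`h ∈ L^∞(|ν|)` with `hν ⊥ 𝒫` is a.e. constant. -/
theorem extreme_annihilating_measure_deficiency_one
    (ρ : Measure ℝ) [IsFiniteMeasure ρ] (hρ : ρ ≠ 0)
    (W : ℝ → ℝ≥0∞) (hWlsc : LowerSemicontinuous W) (hW1 : ∀ x, 1 ≤ W x)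
    (hWgrow : ∀ n : ℕ,
      Tendsto (fun x : ℝ => ENNReal.ofReal (|x| ^ n) / W x) (atBot ⊔ atTop) (𝓝 0))
    (g₀ : ℝ → ℝ) (hg₀m : Measurable g₀) (hg₀1 : ∀ᵐ x ∂ρ, |g₀ x| = 1)
    -- membership of ν in S :
    (hWfin : (∫⁻ x, W x * ENNReal.ofReal |g₀ x| ∂ρ) ≤ 1)
    (hmom : ∀ n : ℕ, Integrable (fun x => |x| ^ n * |g₀ x|) ρ)
    (hann : ∀ n : ℕ, ∫ x, x ^ n * g₀ x ∂ρ = 0)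
    -- extremity of ν in S :
    (hextreme : ∀ g₁ g₂ : ℝ → ℝ, Measurable g₁ → Measurable g₂ →
      ((∫⁻ x, W x * ENNReal.ofReal |g₁ x| ∂ρ) ≤ 1) →
      ((∫⁻ x, W x * ENNReal.ofReal |g₂ x| ∂ρ) ≤ 1) →
      (∀ n : ℕ, Integrable (fun x => |x| ^ n * |g₁ x|) ρ) →
      (∀ n : ℕ, Integrable (fun x => |x| ^ n * |g₂ x|) ρ) →
      (∀ n : ℕ, ∫ x, x ^ n * g₁ x ∂ρ = 0) →
      (∀ n : ℕ, ∫ x, x ^ n * g₂ x ∂ρ = 0) →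
      ∀ α : ℝ, 0 < α → α < 1 →
        (∀ᵐ x ∂ρ, g₀ x = α * g₁ x + (1 - α) * g₂ x) → g₁ =ᵐ[ρ] g₂) :
    ∀ h : ℝ → ℝ, Measurable h → (∃ M : ℝ, ∀ᵐ x ∂ρ, |h x| ≤ M) →
      (∀ n : ℕ, ∫ x, x ^ n * h x * g₀ x ∂ρ = 0) →
      ∃ c : ℝ, ∀ᵐ x ∂ρ, h x = c := by
  intro h hm hMex hannh
  obtain ⟨M, hM⟩ := hMex
  have hWm : Measurable W := hWlsc.measurable
  set B : ℝ := |M| + 1 with hB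
  set K : ℝ := 2 * |M| + 1 with hK
  have hK1 : (1:ℝ) ≤ K := by have := abs_nonneg M; simp only [hK]; linarith
  have hK0 : (0:ℝ) < K := lt_of_lt_of_le one_pos hK1
  set h₁ : ℝ → ℝ := fun x => h x + B with hh₁
  have hm₁ : Measurable h₁ := hm.add_const B
  -- the a.e. facts we use throughout
  have hae : ∀ᵐ x ∂ρ, |g₀ x| = 1 ∧ 1 ≤ h₁ x ∧ h₁ x ≤ K := by
    filter_upwards [hg₀1, hM] with x hx hMx
    have h1 : -M ≤ h x := neg_le_of_abs_le hMx
    have h2 : h x ≤ M := le_of_abs_le hMx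
    have h3 : M ≤ |M| := le_abs_self M
    have h4 : -|M| ≤ -M := neg_le_neg h3
    refine ⟨hx, ?_, ?_⟩ <;> simp only [hh₁, hB, hK] <;> linarith
  -- the total mass of `W h₁ |g₀| dρ`
  set I : ℝ≥0∞ := ∫⁻ x, W x * ENNReal.ofReal |h₁ x * g₀ x| ∂ρ with hI
  have hIle : I ≤ ENNReal.ofReal K := by
    have hb : ∀ᵐ x ∂ρ, W x * ENNReal.ofReal |h₁ x * g₀ x| ≤
        ENNReal.ofReal K * (W x * ENNReal.ofReal |g₀ x|) := by
      filter_upwards [hae] with x ⟨hg, h1, h2⟩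
      have : |h₁ x * g₀ x| ≤ K * |g₀ x| := by
        rw [abs_mul, abs_of_nonneg (by linarith : (0:ℝ) ≤ h₁ x)]
        have := abs_nonneg (g₀ x); nlinarith
      calc W x * ENNReal.ofReal |h₁ x * g₀ x|
          ≤ W x * ENNReal.ofReal (K * |g₀ x|) := by
            exact mul_le_mul_right (ENNReal.ofReal_le_ofReal this) _
        _ = ENNReal.ofReal K * (W x * ENNReal.ofReal |g₀ x|) := by
            rw [ENNReal.ofReal_mul hK0.le]; ring
    calc I ≤ ∫⁻ x, ENNReal.ofReal K * (W x * ENNReal.ofReal |g₀ x|) ∂ρ :=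
          lintegral_mono_ae hb
      _ = ENNReal.ofReal K * ∫⁻ x, W x * ENNReal.ofReal |g₀ x| ∂ρ :=
          lintegral_const_mul' _ _ ENNReal.ofReal_ne_top
      _ ≤ ENNReal.ofReal K * 1 := mul_le_mul_right hWfin _
      _ = ENNReal.ofReal K := mul_one _
  have hItop : I ≠ ⊤ := (lt_of_le_of_lt hIle ENNReal.ofReal_lt_top).ne
  have hIpos : 0 < I := by
    have hb : ∀ᵐ x ∂ρ, (1:ℝ≥0∞) ≤ W x * ENNReal.ofReal |h₁ x * g₀ x| := by
      filter_upwards [hae] with x ⟨hg, h1, h2⟩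
      have : (1:ℝ) ≤ |h₁ x * g₀ x| := by
        rw [abs_mul, hg, mul_one]; rw [abs_of_nonneg (by linarith : (0:ℝ) ≤ h₁ x)]; exact h1
      calc (1:ℝ≥0∞) = 1 * 1 := (one_mul 1).symm
        _ ≤ W x * ENNReal.ofReal |h₁ x * g₀ x| := by
            exact mul_le_mul' (hW1 x) (by simpa using ENNReal.ofReal_le_ofReal this)
    have : ρ Set.univ ≤ I := by
      have : (∫⁻ _, (1:ℝ≥0∞) ∂ρ) ≤ I := lintegral_mono_ae hb
      simpa using this
    exact lt_of_lt_of_le (Measure.measure_univ_pos.mpr hρ) this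
  set c : ℝ := I.toReal with hcdef
  have hc0 : 0 < c := ENNReal.toReal_pos hIpos.ne' hItop
  have hIc : I = ENNReal.ofReal c := (ENNReal.ofReal_toReal hItop).symm
  have hcK : c ≤ K := by
    rw [hIc] at hIle
    exact (ENNReal.ofReal_le_ofReal_iff hK0.le).mp hIle
  set α : ℝ := c / (2 * K) with hα
  have hα0 : 0 < α := div_pos hc0 (by linarith)
  have hα1 : α < 1 := by
    rw [hα, div_lt_one (by linarith)]; linarith
  have h1α : (0:ℝ) < 1 - α := by linarith
  set g₁ : ℝ → ℝ := fun x => h₁ x * g₀ x / c with hg₁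
  set g₂ : ℝ → ℝ := fun x => (g₀ x - α * g₁ x) / (1 - α) with hg₂
  have mg₁ : Measurable g₁ := (hm₁.mul hg₀m).div_const c
  have mg₂ : Measurable g₂ := (hg₀m.sub ((measurable_const.mul mg₁))).div_const (1 - α)
  -- |g₁| pointwise
  have habs₁ : ∀ x, |g₁ x| = |h₁ x * g₀ x| * c⁻¹ := by
    intro x
    rw [hg₁]; simp only
    rw [div_eq_mul_inv, abs_mul, abs_of_pos (inv_pos.mpr hc0)]
  -- W-integral of g₁ equals 1
  have hWg₁ : (∫⁻ x, W x * ENNReal.ofReal |g₁ x| ∂ρ) = 1 := by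
    have : ∀ x, W x * ENNReal.ofReal |g₁ x| =
        (W x * ENNReal.ofReal |h₁ x * g₀ x|) * ENNReal.ofReal c⁻¹ := by
      intro x
      rw [habs₁ x, ENNReal.ofReal_mul (abs_nonneg _), mul_assoc]
    rw [lintegral_congr fun x => this x, lintegral_mul_const' _ _ ENNReal.ofReal_ne_top,
      ← hI, hIc, ← ENNReal.ofReal_mul hc0.le, mul_inv_cancel₀ hc0.ne', ENNReal.ofReal_one]
  -- a.e. bounds on g₁, g₂
  have haeb : ∀ᵐ x ∂ρ, |g₁ x| ≤ (K / c) * |g₀ x| ∧ |g₂ x| ≤ (1 - α)⁻¹ * (1 + α * (K / c)) * |g₀ x| := by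
    filter_upwards [hae] with x ⟨hg, hx1, hx2⟩
    have hb1 : |g₁ x| ≤ (K / c) * |g₀ x| := by
      rw [habs₁ x, abs_mul, abs_of_nonneg (by linarith : (0:ℝ) ≤ h₁ x)]
      rw [div_eq_mul_inv]
      have hg0 := abs_nonneg (g₀ x)
      have hci := inv_pos.mpr hc0
      calc h₁ x * |g₀ x| * c⁻¹ ≤ K * |g₀ x| * c⁻¹ :=
            mul_le_mul_of_nonneg_right (mul_le_mul_of_nonneg_right hx2 hg0) hci.le
        _ = K * c⁻¹ * |g₀ x| := by ring
    refine ⟨hb1, ?_⟩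
    have h3 : |g₀ x - α * g₁ x| ≤ |g₀ x| + α * |g₁ x| := by
      calc |g₀ x - α * g₁ x| ≤ |g₀ x| + |α * g₁ x| := abs_sub _ _
        _ = |g₀ x| + α * |g₁ x| := by rw [abs_mul, abs_of_pos hα0]
    have h4 : |g₂ x| = |g₀ x - α * g₁ x| * (1 - α)⁻¹ := by
      rw [hg₂]; simp only
      rw [div_eq_mul_inv, abs_mul, abs_of_pos (inv_pos.mpr h1α)]
    have h5 : |g₀ x| + α * |g₁ x| ≤ 1 + α * (K / c) := by
      have hb1' : |g₁ x| ≤ K / c := by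
        have := hb1; rwa [hg, mul_one] at this
      have := mul_le_mul_of_nonneg_left hb1' hα0.le
      rw [hg]; linarith
    calc |g₂ x| = |g₀ x - α * g₁ x| * (1 - α)⁻¹ := h4
      _ ≤ (|g₀ x| + α * |g₁ x|) * (1 - α)⁻¹ :=
          mul_le_mul_of_nonneg_right h3 (inv_pos.mpr h1α).le
      _ ≤ (1 + α * (K / c)) * (1 - α)⁻¹ :=
          mul_le_mul_of_nonneg_right h5 (inv_pos.mpr h1α).le
      _ = (1 - α)⁻¹ * (1 + α * (K / c)) * |g₀ x| := by rw [hg]; ring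
  -- W-integral of g₂ at most 1
  have hWg₂ : (∫⁻ x, W x * ENNReal.ofReal |g₂ x| ∂ρ) ≤ 1 := by
    -- key pointwise identity a.e.
    have hkey : ∀ᵐ x ∂ρ,
        W x * ENNReal.ofReal |g₂ x| * ENNReal.ofReal (1 - α)
          + ENNReal.ofReal (α / c) * (W x * ENNReal.ofReal |h₁ x * g₀ x|)
        = W x * ENNReal.ofReal |g₀ x| := by
      filter_upwards [hae] with x ⟨hg, hx1, hx2⟩
      have hpos : (0:ℝ) ≤ 1 - α * h₁ x / c := by
        have he : α * h₁ x / c = h₁ x / (2 * K) := by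
          rw [hα]; field_simp
        rw [he]
        have : h₁ x / (2 * K) ≤ 1 / 2 := by
          rw [div_le_div_iff₀ (by linarith) (by norm_num)]; linarith
        linarith
      have hgabs : |g₀ x| = 1 := hg
      have hg2val : |g₂ x| = (1 - α * h₁ x / c) / (1 - α) := by
        have : g₂ x = g₀ x * ((1 - α * h₁ x / c) / (1 - α)) := by
          rw [hg₂, hg₁]; simp only; field_simp
        rw [this, abs_mul, hgabs, one_mul,
          abs_of_nonneg (div_nonneg hpos h1α.le)]
      have hh1abs : |h₁ x * g₀ x| = h₁ x := by
        rw [abs_mul, hgabs, mul_one, abs_of_nonneg (by linarith)]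
      rw [hg2val, hh1abs, hgabs]
      -- now a computation in ℝ≥0∞ with ofReal of nonnegative reals
      rw [mul_assoc, ← ENNReal.ofReal_mul (div_nonneg hpos h1α.le),
        div_mul_cancel₀ _ h1α.ne']
      rw [mul_comm (ENNReal.ofReal (α / c)) _, mul_assoc,
        ← ENNReal.ofReal_mul (by linarith : (0:ℝ) ≤ h₁ x)]
      rw [← mul_add, ← ENNReal.ofReal_add hpos (by positivity)]
      congr 1
      exact congrArg ENNReal.ofReal (by field_simp; ring)
    have hmeas2 : Measurable fun x => W x * ENNReal.ofReal |g₂ x| * ENNReal.ofReal (1 - α) :=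
      ((hWm.mul (ENNReal.measurable_ofReal.comp mg₂.abs))).mul_const _
    have hsum : (∫⁻ x, W x * ENNReal.ofReal |g₂ x| ∂ρ) * ENNReal.ofReal (1 - α)
        + ENNReal.ofReal (α / c) * I ≤ 1 := by
      have := lintegral_congr_ae hkey
      rw [lintegral_add_left hmeas2] at this
      rw [lintegral_mul_const' _ _ ENNReal.ofReal_ne_top,
        lintegral_const_mul' _ _ ENNReal.ofReal_ne_top] at this
      rw [this]
      exact hWfin
    have hoc : ENNReal.ofReal (α / c) * I = ENNReal.ofReal α := by
      rw [hIc, ← ENNReal.ofReal_mul (by positivity), div_mul_cancel₀ _ hc0.ne']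
    rw [hoc] at hsum
    have hsub : (∫⁻ x, W x * ENNReal.ofReal |g₂ x| ∂ρ) * ENNReal.ofReal (1 - α)
        ≤ ENNReal.ofReal (1 - α) := by
      have h2 := ENNReal.le_sub_of_add_le_right ENNReal.ofReal_ne_top hsum
      have h3 : (1:ℝ≥0∞) - ENNReal.ofReal α = ENNReal.ofReal (1 - α) := by
        rw [← ENNReal.ofReal_one, ← ENNReal.ofReal_sub _ hα0.le]
      rwa [h3] at h2
    have hne0 : ENNReal.ofReal (1 - α) ≠ 0 := ne_of_gt (ENNReal.ofReal_pos.mpr h1α)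
    exact (ENNReal.mul_le_mul_iff_left hne0 ENNReal.ofReal_ne_top).mp
      (by rw [one_mul]; exact hsub)
  -- moments of g₁ and g₂
  have hmom₁ : ∀ n : ℕ, Integrable (fun x => |x| ^ n * |g₁ x|) ρ := by
    intro n
    refine Integrable.mono' (((hmom n).const_mul (K / c))) ?_ ?_
    · exact ((measurable_abs.pow_const n).mul mg₁.abs).aestronglyMeasurable
    · filter_upwards [haeb] with x ⟨hb1, _⟩
      rw [Real.norm_eq_abs, abs_of_nonneg (by positivity)]
      have : (0:ℝ) ≤ |x| ^ n := by positivity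
      calc |x| ^ n * |g₁ x| ≤ |x| ^ n * ((K / c) * |g₀ x|) := by nlinarith [abs_nonneg (g₁ x)]
        _ = K / c * (|x| ^ n * |g₀ x|) := by ring
  have hmom₂ : ∀ n : ℕ, Integrable (fun x => |x| ^ n * |g₂ x|) ρ := by
    intro n
    refine Integrable.mono' (((hmom n).const_mul ((1 - α)⁻¹ * (1 + α * (K / c))))) ?_ ?_
    · exact ((measurable_abs.pow_const n).mul mg₂.abs).aestronglyMeasurable
    · filter_upwards [haeb] with x ⟨_, hb2⟩
      rw [Real.norm_eq_abs, abs_of_nonneg (by positivity)]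
      have : (0:ℝ) ≤ |x| ^ n := by positivity
      calc |x| ^ n * |g₂ x| ≤ |x| ^ n * ((1 - α)⁻¹ * (1 + α * (K / c)) * |g₀ x|) := by
            nlinarith [abs_nonneg (g₂ x)]
        _ = (1 - α)⁻¹ * (1 + α * (K / c)) * (|x| ^ n * |g₀ x|) := by ring
  -- integrability of the signed moment integrands
  have int_g₀ : ∀ n : ℕ, Integrable (fun x => x ^ n * g₀ x) ρ := by
    intro n
    refine Integrable.mono' (hmom n) ?_ (ae_of_all _ fun x => ?_)
    · exact ((measurable_id.pow_const n).mul hg₀m).aestronglyMeasurable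
    · rw [Real.norm_eq_abs, abs_mul, abs_pow]
  have int_hg₀ : ∀ n : ℕ, Integrable (fun x => x ^ n * h x * g₀ x) ρ := by
    intro n
    refine Integrable.mono' ((hmom n).const_mul |M|) ?_ ?_
    · exact (((measurable_id.pow_const n).mul hm).mul hg₀m).aestronglyMeasurable
    · filter_upwards [hM] with x hMx
      rw [Real.norm_eq_abs, abs_mul, abs_mul, abs_pow]
      have h1 : |h x| ≤ |M| := le_trans hMx (le_abs_self M)
      calc |x| ^ n * |h x| * |g₀ x| ≤ |x| ^ n * |M| * |g₀ x| := by
            have := abs_nonneg (g₀ x)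
            have hxn : (0:ℝ) ≤ |x| ^ n := by positivity
            gcongr
        _ = |M| * (|x| ^ n * |g₀ x|) := by ring
  have int_g₁ : ∀ n : ℕ, Integrable (fun x => x ^ n * g₁ x) ρ := by
    intro n
    refine Integrable.mono' (hmom₁ n) ?_ (ae_of_all _ fun x => ?_)
    · exact ((measurable_id.pow_const n).mul mg₁).aestronglyMeasurable
    · rw [Real.norm_eq_abs, abs_mul, abs_pow]
  -- annihilation of g₁
  have ann₁ : ∀ n : ℕ, ∫ x, x ^ n * g₁ x ∂ρ = 0 := by
    intro n
    have heq : (fun x => x ^ n * g₁ x)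
        = fun x => c⁻¹ * (x ^ n * h x * g₀ x) + (B / c) * (x ^ n * g₀ x) := by
      funext x; rw [hg₁, hh₁]; simp only; field_simp
    rw [heq, integral_add ((int_hg₀ n).const_mul _) ((int_g₀ n).const_mul _),
      integral_const_mul, integral_const_mul, hannh n, hann n]
    ring
  -- annihilation of g₂
  have ann₂ : ∀ n : ℕ, ∫ x, x ^ n * g₂ x ∂ρ = 0 := by
    intro n
    have heq : (fun x => x ^ n * g₂ x)
        = fun x => (1 - α)⁻¹ * (x ^ n * g₀ x) - (α / (1 - α)) * (x ^ n * g₁ x) := by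
      funext x; rw [hg₂]; simp only; field_simp
    rw [heq, integral_sub ((int_g₀ n).const_mul _) ((int_g₁ n).const_mul _),
      integral_const_mul, integral_const_mul, hann n, ann₁ n]
    ring
  -- decomposition
  have hdecomp : ∀ᵐ x ∂ρ, g₀ x = α * g₁ x + (1 - α) * g₂ x := by
    refine ae_of_all _ fun x => ?_
    rw [hg₂]; simp only; field_simp; ring
  -- apply extremity
  have heq := hextreme g₁ g₂ mg₁ mg₂ (le_of_eq hWg₁) hWg₂ hmom₁ hmom₂ ann₁ ann₂ α hα0 hα1 hdecomp
  refine ⟨c - B, ?_⟩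
  filter_upwards [heq, hae] with x hx ⟨hg, hx1, hx2⟩
  have hg₀ne : g₀ x ≠ 0 := fun h0 => by
    rw [h0, abs_zero] at hg; exact zero_ne_one hg
  rw [hg₁, hg₂, hg₁] at hx
  simp only at hx
  field_simp at hx
  have e2 : (h₁ x - c) * (g₀ x * c) = 0 := by linear_combination (g₀ x * c) * hx
  rcases mul_eq_zero.mp e2 with h5 | h5
  · simp only [hh₁] at h5; linarith
  · exact absurd h5 (mul_ne_zero hg₀ne hc0.ne')
end

section
/- (Main theorem, sufficiency direction) Let W be a weight. If there exists a balanced sequence Λ = {λ_n} of zero density whose characteristic sequence P = {p_n} satisfies Σ_n W(λ_n) exp(p_n) < ∞, then polynomials are not dense in C_W. -/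
set_option maxHeartbeats 1000000

open MeasureTheory Filter Topology
open scoped ENNReal

section Aux
open Polynomial Lagrange Finset Filter Topology

noncomputable def tt (lam : ℤ → ℝ) (i k : ℤ) : ℝ := Real.log ((1 + lam k ^ 2) / (lam k - lam i) ^ 2)

noncomputable def pF (lam : ℤ → ℝ) (F : Finset ℤ) (i : ℤ) : ℝ :=
  (Real.log (1 + lam i ^ 2) + ∑ k ∈ F.erase i, tt lam i k) / 2

theorem divdiff_zero {F : Type*} [Field F] {ι : Type*} [DecidableEq ι] (s : Finset ι) (v : ι → F)
    (hvs : Set.InjOn v s) (f : F[X]) (hdeg : f.natDegree + 2 ≤ s.card) :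
    ∑ i ∈ s, f.eval (v i) * nodalWeight s v i = 0 := by
  have hlt : f.degree < (s.card : WithBot ℕ) := by
    calc f.degree ≤ (f.natDegree : WithBot ℕ) := Polynomial.degree_le_natDegree
    _ < (s.card : WithBot ℕ) := by exact_mod_cast Nat.lt_of_lt_of_le (by omega) le_rfl
  have h := Lagrange.eq_interpolate hvs hlt
  have hc : f.coeff (s.card - 1) = 0 := by
    apply Polynomial.coeff_eq_zero_of_natDegree_lt; omega
  rw [h, Lagrange.interpolate_apply, Polynomial.finset_sum_coeff] at hc
  rw [← hc]
  apply Finset.sum_congr rfl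
  intro i hi
  have hb : Lagrange.basis s v i = C (nodalWeight s v i) * nodal (s.erase i) v := by
    rw [Lagrange.basis_eq_prod_sub_inv_mul_nodal_div hi, ← nodal_erase_eq_nodal_div hi]
  rw [hb, ← mul_assoc, ← Polynomial.C_mul, Polynomial.coeff_C_mul]
  have hmon : (nodal (s.erase i) v).Monic := nodal_monic
  have hnd : (nodal (s.erase i) v).natDegree = s.card - 1 := by
    rw [natDegree_nodal, Finset.card_erase_of_mem hi]
  rw [← hnd, hmon.coeff_natDegree, mul_one]

theorem exp_pF_eq (lam : ℤ → ℝ) (hsq : ∀ j, 0 < 1 + lam j ^ 2) (F : Finset ℤ) {i : ℤ}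
    (hi : i ∈ F) (hne : ∀ j ∈ F.erase i, lam j ≠ lam i) :
    Real.exp (pF lam F i)
      = (∏ j ∈ F, Real.sqrt (1 + lam j ^ 2)) * ∏ j ∈ F.erase i, |lam i - lam j|⁻¹ := by
  rw [pF, add_div, Real.exp_add, Finset.sum_div, Real.exp_sum]
  have h1 : Real.exp (Real.log (1 + lam i ^ 2) / 2) = Real.sqrt (1 + lam i ^ 2) := by
    rw [Real.exp_half, Real.exp_log (hsq i)]
  have h2 : ∀ j ∈ F.erase i, Real.exp (tt lam i j / 2)
      = Real.sqrt (1 + lam j ^ 2) * |lam i - lam j|⁻¹ := by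
    intro j hj
    have hd : (0:ℝ) < (lam j - lam i) ^ 2 := by
      have := sub_ne_zero.mpr (hne j hj); positivity
    rw [tt, Real.exp_half, Real.exp_log (div_pos (hsq j) hd),
      Real.sqrt_div (le_of_lt (hsq j)), Real.sqrt_sq_eq_abs, abs_sub_comm, div_eq_mul_inv]
  rw [Finset.prod_congr rfl h2, Finset.prod_mul_distrib, h1, ← mul_assoc,
    Finset.mul_prod_erase F (fun j => Real.sqrt (1 + lam j ^ 2)) hi]

theorem prod_sign_eq (lam : ℤ → ℝ) (hmono : StrictMono lam) {a b i : ℤ}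
    (hi : i ∈ Finset.Ioo (-a) b) :
    ∏ j ∈ (Finset.Ioo (-a) b).erase i, (lam i - lam j)⁻¹
      = (-1 : ℝ) ^ (b - 1 - i) * ∏ j ∈ (Finset.Ioo (-a) b).erase i, |lam i - lam j|⁻¹ := by
  simp only [Finset.mem_Ioo] at hi
  have hstep : ∀ j ∈ (Finset.Ioo (-a) b).erase i,
      (lam i - lam j)⁻¹ = (if i < j then (-1:ℝ) else 1) * |lam i - lam j|⁻¹ := by
    intro j hj
    rcases Finset.mem_erase.mp hj with ⟨hji, _⟩
    rcases lt_or_gt_of_ne (Ne.symm hji) with h | h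
    · have hlt : lam i - lam j < 0 := sub_neg.mpr (hmono h)
      rw [if_pos h, abs_of_neg hlt, inv_neg]; ring
    · have hlt : 0 < lam i - lam j := sub_pos.mpr (hmono h)
      rw [if_neg (not_lt.mpr h.le), abs_of_pos hlt, one_mul]
  rw [Finset.prod_congr rfl hstep, Finset.prod_mul_distrib]
  congr 1
  rw [Finset.prod_ite, Finset.prod_const, Finset.prod_const, one_pow, mul_one]
  have hfilt : ((Finset.Ioo (-a) b).erase i).filter (fun j => i < j) = Finset.Ioo i b := by
    ext j
    simp only [Finset.mem_filter, Finset.mem_erase, Finset.mem_Ioo]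
    constructor
    · rintro ⟨⟨_, _, h2⟩, h3⟩; exact ⟨h3, h2⟩
    · rintro ⟨h1, h2⟩; exact ⟨⟨by omega, by omega, h2⟩, h1⟩
  rw [hfilt]
  have hcard : (Finset.Ioo i b).card = (b - 1 - i).toNat := by
    rw [Int.card_Ioo]; congr 1; omega
  rw [hcard, ← zpow_natCast, Int.toNat_of_nonneg (by omega)]

theorem neg_one_zpow_self_inv (i : ℤ) : ((-1:ℝ) ^ i)⁻¹ = (-1:ℝ) ^ i := by
  rcases Int.even_or_odd i with h | h
  · rw [h.neg_one_zpow]; norm_num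
  · rw [h.neg_one_zpow]; norm_num

theorem neg_one_zpow_eq (b i : ℤ) : (-1 : ℝ) ^ (b - 1 - i) = (-1:ℝ) ^ (b-1) * (-1:ℝ) ^ i := by
  have h : (-1:ℝ) ≠ 0 := by norm_num
  rw [sub_eq_add_neg (b-1) i, zpow_add₀ h, zpow_neg, neg_one_zpow_self_inv]

theorem key_annihilation (lam : ℤ → ℝ) (hmono : StrictMono lam) (a b : ℤ)
    (s : Polynomial ℝ) (hdeg : s.natDegree + 2 ≤ (Finset.Ioo (-a) b).card) :
    ∑ i ∈ Finset.Ioo (-a) b,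
      (-1:ℝ) ^ i * Real.exp (pF lam (Finset.Ioo (-a) b) i) * s.eval (lam i) = 0 := by
  set F := Finset.Ioo (-a) b with hF
  have hsq : ∀ j, 0 < 1 + lam j ^ 2 := fun j => by positivity
  have hinj : Set.InjOn lam F := hmono.injective.injOn
  have hG : 0 < ∏ j ∈ F, Real.sqrt (1 + lam j ^ 2) :=
    Finset.prod_pos fun j _ => Real.sqrt_pos.mpr (hsq j)
  set G := ∏ j ∈ F, Real.sqrt (1 + lam j ^ 2) with hGdef
  have h0 := divdiff_zero F lam hinj s hdeg
  have hNW : ∀ i ∈ F, nodalWeight F lam i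
      = (-1:ℝ)^(b-1) * ((-1:ℝ)^i * (Real.exp (pF lam F i) / G)) := by
    intro i hi
    have hne : ∀ j ∈ F.erase i, lam j ≠ lam i := by
      intro j hj
      exact fun hc => (Finset.mem_erase.mp hj).1 (hmono.injective hc)
    have e1 := exp_pF_eq lam hsq F hi hne
    have e2 := prod_sign_eq lam hmono hi
    rw [nodalWeight, e2, neg_one_zpow_eq, mul_assoc]
    congr 2
    rw [eq_comm, div_eq_iff (ne_of_gt hG), e1]
    exact mul_comm _ _
  rw [Finset.sum_congr rfl (fun i hi => by rw [hNW i hi])] at h0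
  have h1 : ∀ i ∈ F, s.eval (lam i) * ((-1:ℝ)^(b-1) * ((-1:ℝ)^i * (Real.exp (pF lam F i) / G)))
      = ((-1:ℝ)^(b-1) / G) * ((-1:ℝ)^i * Real.exp (pF lam F i) * s.eval (lam i)) := by
    intro i _; ring
  rw [Finset.sum_congr rfl h1, ← Finset.mul_sum] at h0
  have hc : ((-1:ℝ)^(b-1) / G) ≠ 0 := by
    apply div_ne_zero _ (ne_of_gt hG)
    rcases Int.even_or_odd (b-1) with h | h
    · rw [h.neg_one_zpow]; norm_num
    · rw [h.neg_one_zpow]; norm_num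
  exact (mul_eq_zero.mp h0).resolve_left hc


noncomputable def xx (lam : ℤ → ℝ) (k : ℤ) : ℝ := if lam k = 0 then 0 else (lam k)⁻¹

section basics
variable {lam : ℤ → ℝ}

lemma lam_pos (hmono : StrictMono lam) (hpos : 0 ≤ lam 0) {k : ℤ} (hk : 1 ≤ k) : 0 < lam k :=
  lt_of_le_of_lt hpos (lt_of_lt_of_le (hmono one_pos) (hmono.monotone hk))

lemma lam_neg (hmono : StrictMono lam) (hneg : lam (-1) < 0) {k : ℤ} (hk : k ≤ -1) : lam k < 0 :=
  lt_of_le_of_lt (hmono.monotone hk) hneg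

lemma lam_ne_zero (hmono : StrictMono lam) (hpos : 0 ≤ lam 0) (hneg : lam (-1) < 0)
    {k : ℤ} (hk : k ≠ 0) : lam k ≠ 0 := by
  rcases lt_or_gt_of_ne hk with h | h
  · exact ne_of_lt (lam_neg hmono hneg (by omega))
  · exact ne_of_gt (lam_pos hmono hpos (by omega))

lemma xx_eq (hmono : StrictMono lam) (hpos : 0 ≤ lam 0) (hneg : lam (-1) < 0)
    {k : ℤ} (hk : k ≠ 0) : xx lam k = (lam k)⁻¹ := by
  rw [xx, if_neg (lam_ne_zero hmono hpos hneg hk)]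

lemma abs_xx_le (hmono : StrictMono lam) (hpos : 0 ≤ lam 0) (hneg : lam (-1) < 0)
    {k : ℤ} (hk : k ≠ 0) {c : ℝ} (hc : 0 < c) (hlam : c ≤ |lam k|) : |xx lam k| ≤ c⁻¹ := by
  rw [xx_eq hmono hpos hneg hk, abs_inv]
  exact inv_anti₀ hc hlam

end basics

lemma exists_K0 (lam : ℤ → ℝ) (hmono : StrictMono lam)
    (htop : Tendsto lam atTop atTop) (hbot : Tendsto lam atBot atBot)
    (hneg : lam (-1) < 0) (hpos : 0 ≤ lam 0)
    (hdens : Tendsto (fun A : ℝ => ((Set.range lam ∩ Set.Ioo (-A) A).ncard : ℝ) / (2 * A))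
      atTop (𝓝 0)) :
    ∃ K₀ : ℤ, 2 ≤ K₀ ∧ ∀ k : ℤ, K₀ ≤ |k| → ((|k| : ℝ) ≤ |lam k| ∧ 2 * lam 0 + 1 ≤ |lam k|) := by
  -- part 2 : eventually |lam k| large
  obtain ⟨Kp, hKp⟩ := (htop.eventually_ge_atTop (2 * lam 0 + 1)).exists_forall_of_atTop
  obtain ⟨Km, hKm⟩ := (hbot.eventually_le_atBot (-(2 * lam 0 + 1))).exists_forall_of_atBot
  -- part 1 : density bound
  obtain ⟨A₀, hA₀⟩ := (hdens.eventually (gt_mem_nhds (show (0:ℝ) < 1/4 by norm_num))).exists_forall_of_atTop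
  have hcount : ∀ k : ℤ, (4:ℝ) ≤ (k:ℝ) → A₀ ≤ (k:ℝ) → (k:ℝ) ≤ |lam k| := by
    intro k h4 hA
    by_contra hcon
    push_neg at hcon
    have hk0 : (0:ℝ) < k := by linarith
    have hlamlt : lam k < (k:ℝ) := lt_of_le_of_lt (le_abs_self _) hcon
    set SS : Set ℝ := Set.range lam ∩ Set.Ioo (-(k:ℝ)) (k:ℝ) with hSS
    obtain ⟨M, hM⟩ := (htop.eventually_ge_atTop ((k:ℝ))).exists_forall_of_atTop
    obtain ⟨m, hm⟩ := (hbot.eventually_le_atBot (-(k:ℝ))).exists_forall_of_atBot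
    have hfin : SS.Finite := by
      apply Set.Finite.subset ((Set.finite_Icc m M).image lam)
      rintro y ⟨⟨j, rfl⟩, hy2⟩
      refine ⟨j, ⟨?_, ?_⟩, rfl⟩
      · by_contra hj; push_neg at hj
        exact absurd (hm j (by omega)) (by rcases hy2 with ⟨h1, _⟩; linarith)
      · by_contra hj; push_neg at hj
        exact absurd (hM j (by omega)) (by rcases hy2 with ⟨_, h2⟩; linarith)
    have hsub : ↑((Finset.Icc (0:ℤ) k).image lam) ⊆ SS := by
      intro y hy
      simp only [Finset.coe_image, Set.mem_image, Finset.mem_coe, Finset.mem_Icc] at hy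
      obtain ⟨j, ⟨hj0, hjk⟩, rfl⟩ := hy
      refine ⟨⟨j, rfl⟩, ?_, ?_⟩
      · have : 0 ≤ lam j := le_trans hpos (hmono.monotone hj0)
        linarith
      · exact lt_of_le_of_lt (hmono.monotone hjk) hlamlt
    have hcard : ((Finset.Icc (0:ℤ) k).image lam).card = (k+1).toNat := by
      rw [Finset.card_image_of_injective _ hmono.injective, Int.card_Icc]
      congr 1; omega
    have hle : ((k+1).toNat : ℕ) ≤ SS.ncard := by
      rw [← hcard, ← Set.ncard_coe_finset]
      exact Set.ncard_le_ncard hsub hfin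
    have hup := hA₀ (k:ℝ) hA
    rw [div_lt_iff₀ (by linarith)] at hup
    have : (SS.ncard : ℝ) < (k:ℝ)/2 := by linarith
    have hki : (0:ℤ) ≤ k := by exact_mod_cast le_trans (by norm_num : (0:ℝ) ≤ 4) h4
    have hcast : (((k+1).toNat : ℕ) : ℝ) = (k:ℝ) + 1 := by
      have h5 := Int.toNat_of_nonneg (show (0:ℤ) ≤ k + 1 by omega)
      exact_mod_cast congrArg (Int.cast : ℤ → ℝ) h5
    have hge : ((k:ℝ) + 1) ≤ (SS.ncard : ℝ) := by
      rw [← hcast]; exact_mod_cast hle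
    linarith
  have hcountn : ∀ k : ℤ, (k:ℝ) ≤ -4 → (k:ℝ) ≤ -A₀ → (-(k:ℝ)) ≤ |lam k| := by
    intro k h4 hA
    by_contra hcon
    push_neg at hcon
    have hk0 : (k:ℝ) < 0 := by linarith
    have hlamgt : (k:ℝ) < lam k := by
      have := neg_abs_le (lam k); linarith
    set SS : Set ℝ := Set.range lam ∩ Set.Ioo ((k:ℝ)) (-(k:ℝ)) with hSS
    obtain ⟨M, hM⟩ := (htop.eventually_ge_atTop ((-k:ℝ))).exists_forall_of_atTop
    obtain ⟨m, hm⟩ := (hbot.eventually_le_atBot ((k:ℝ))).exists_forall_of_atBot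
    have hfin : SS.Finite := by
      apply Set.Finite.subset ((Set.finite_Icc m M).image lam)
      rintro y ⟨⟨j, rfl⟩, hy2⟩
      refine ⟨j, ⟨?_, ?_⟩, rfl⟩
      · by_contra hj; push_neg at hj
        exact absurd (hm j (by omega)) (by rcases hy2 with ⟨h1, _⟩; linarith)
      · by_contra hj; push_neg at hj
        exact absurd (hM j (by omega)) (by rcases hy2 with ⟨_, h2⟩; push_cast at h2 ⊢; linarith)
    have hsub : ↑((Finset.Icc k (-1:ℤ)).image lam) ⊆ SS := by
      intro y hy
      simp only [Finset.coe_image, Set.mem_image, Finset.mem_coe, Finset.mem_Icc] at hy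
      obtain ⟨j, ⟨hjk, hj1⟩, rfl⟩ := hy
      refine ⟨⟨j, rfl⟩, ?_, ?_⟩
      · exact lt_of_lt_of_le hlamgt (hmono.monotone hjk)
      · have : lam j < 0 := lam_neg hmono hneg hj1
        linarith
    have hcard : ((Finset.Icc k (-1:ℤ)).image lam).card = (-k).toNat := by
      rw [Finset.card_image_of_injective _ hmono.injective, Int.card_Icc]
      congr 1; omega
    have hle : (((-k).toNat : ℕ) : ℝ) ≤ (SS.ncard : ℝ) := by
      have : ((-k).toNat : ℕ) ≤ SS.ncard := by
        rw [← hcard, ← Set.ncard_coe_finset]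
        exact Set.ncard_le_ncard hsub hfin
      exact_mod_cast this
    have hki : k ≤ -4 := by exact_mod_cast h4
    have hup := hA₀ (-(k:ℝ)) (by linarith)
    rw [div_lt_iff₀ (by linarith), neg_neg, ← hSS] at hup
    have hcast : (((-k).toNat : ℕ) : ℝ) = -(k:ℝ) := by
      have h5 := Int.toNat_of_nonneg (show (0:ℤ) ≤ -k by omega)
      have := congrArg (Int.cast : ℤ → ℝ) h5
      push_cast at this ⊢
      linarith
    rw [hcast] at hle
    linarith
  -- assemble
  refine ⟨max (max (|Kp| + 1) (|Km| + 1)) (max (⌈A₀⌉ + 4) 4), by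
    have := le_max_right (⌈A₀⌉ + 4) 4; omega, ?_⟩
  intro k hk
  have h4i : (4:ℤ) ≤ |k| := le_trans (le_trans (le_max_right _ _) (le_max_right _ _)) hk
  have hAi : ⌈A₀⌉ + 4 ≤ |k| := le_trans (le_trans (le_max_left _ _) (le_max_right _ _)) hk
  have hKpi : |Kp| + 1 ≤ |k| := le_trans (le_trans (le_max_left _ _) (le_max_left _ _)) hk
  have hKmi : |Km| + 1 ≤ |k| := le_trans (le_trans (le_max_right _ _) (le_max_left _ _)) hk
  have hceil := Int.le_ceil A₀
  rcases le_or_gt 0 k with h | h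
  · rw [abs_of_nonneg h] at h4i hAi hKpi hKmi
    constructor
    · rw [abs_of_nonneg (show (0:ℝ) ≤ (k:ℝ) by exact_mod_cast h)]
      apply hcount k (by exact_mod_cast h4i)
      have h2 : ((⌈A₀⌉:ℤ):ℝ) ≤ (k:ℝ) - 4 := by exact_mod_cast (show ⌈A₀⌉ ≤ k - 4 by omega)
      linarith
    · have hh := hKp k (by have := le_abs_self Kp; omega)
      calc 2 * lam 0 + 1 ≤ lam k := hh
      _ ≤ |lam k| := le_abs_self _
  · rw [abs_of_neg h] at h4i hAi hKpi hKmi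
    constructor
    · rw [abs_of_neg (show (k:ℝ) < 0 by exact_mod_cast h)]
      apply hcountn k (by exact_mod_cast (show k ≤ (-4:ℤ) by omega))
      have h2 : ((⌈A₀⌉:ℤ):ℝ) ≤ -(k:ℝ) - 4 := by exact_mod_cast (show ⌈A₀⌉ ≤ -k - 4 by omega)
      linarith
    · have hh := hKm k (by have := neg_abs_le Km; omega)
      have := neg_abs_le (lam k)
      linarith

lemma tendsto_Ioo_finset : Tendsto (fun N : ℕ => Finset.Ioo (-(N:ℤ)) (N:ℤ)) atTop atTop := by
  apply tendsto_atTop_finset_of_monotone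
  · intro m n hmn
    apply Finset.Ioo_subset_Ioo <;> omega
  · intro k
    exact ⟨k.natAbs + 1, by simp only [Finset.mem_Ioo]; omega⟩

lemma summable_int_rpow2 : Summable (fun k : ℤ => ((k:ℝ)^2)⁻¹) := by
  have := Real.summable_one_div_int_pow.mpr (by norm_num : 1 < 2)
  simpa [one_div] using this

lemma summable_dd (lam : ℤ → ℝ) (hmono : StrictMono lam) (hpos : 0 ≤ lam 0)
    (hneg : lam (-1) < 0) (K₀ : ℤ) (hK2 : 2 ≤ K₀)
    (hK : ∀ k : ℤ, K₀ ≤ |k| → (|(k:ℝ)| ≤ |lam k| ∧ 2 * lam 0 + 1 ≤ |lam k|)) :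
    Summable (fun k : ℤ => xx lam k / (1 + lam k ^ 2)) := by
  set dd := fun k : ℤ => xx lam k / (1 + lam k ^ 2) with hdd
  have hbig : ∀ k : ℤ, K₀ ≤ |k| → |dd k| ≤ ((k:ℝ)^2)⁻¹ := by
    intro k hk
    have hk0 : k ≠ 0 := by rintro rfl; simp at hk; omega
    have hlam := (hK k hk).1
    have hkpos : (0:ℝ) < |(k:ℝ)| := by
      simp only [abs_pos]
      exact_mod_cast hk0
    have hlampos : (0:ℝ) < |lam k| := lt_of_lt_of_le hkpos hlam
    have h1 : |xx lam k| ≤ |(k:ℝ)|⁻¹ := abs_xx_le hmono hpos hneg hk0 hkpos hlam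
    have h2 : |1 + lam k ^ 2|⁻¹ ≤ |(k:ℝ)|⁻¹ := by
      apply inv_anti₀ hkpos
      rw [abs_of_pos (by positivity : (0:ℝ) < 1 + lam k ^ 2)]
      nlinarith [sq_abs (lam k), sq_abs ((k:ℝ)), abs_nonneg (lam k), abs_nonneg ((k:ℝ))]
    calc |dd k| = |xx lam k| * |1 + lam k ^ 2|⁻¹ := by rw [hdd, abs_div, div_eq_mul_inv]
    _ ≤ |(k:ℝ)|⁻¹ * |(k:ℝ)|⁻¹ := by
        apply mul_le_mul h1 h2 (by positivity) (by positivity)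
    _ = ((k:ℝ)^2)⁻¹ := by rw [← mul_inv, ← sq_abs]; ring_nf
  -- split into finite part and tail
  have hle : ∀ k : ℤ, |dd k| ≤ (if K₀ ≤ |k| then ((k:ℝ)^2)⁻¹ else |dd k|) := by
    intro k
    by_cases h : K₀ ≤ |k|
    · rw [if_pos h]; exact hbig k h
    · rw [if_neg h]
  have hg : Summable (fun k : ℤ => (if K₀ ≤ |k| then ((k:ℝ)^2)⁻¹ else |dd k|)) := by
    have : (fun k : ℤ => (if K₀ ≤ |k| then ((k:ℝ)^2)⁻¹ else |dd k|))
        = (fun k : ℤ => (if K₀ ≤ |k| then ((k:ℝ)^2)⁻¹ else 0))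
          + (fun k : ℤ => (if K₀ ≤ |k| then 0 else |dd k|)) := by
      funext k; by_cases h : K₀ ≤ |k| <;> simp [h]
    rw [this]
    apply Summable.add
    · refine Summable.of_nonneg_of_le ?_ ?_ summable_int_rpow2
      · intro k
        by_cases h : K₀ ≤ |k|
        · rw [if_pos h]; positivity
        · rw [if_neg h]
      · intro k
        by_cases h : K₀ ≤ |k|
        · rw [if_pos h]
        · rw [if_neg h]; positivity
    · apply summable_of_ne_finset_zero (s := Finset.Ioo (-K₀) K₀)
      intro k hk
      simp only [Finset.mem_Ioo, not_and_or, not_lt] at hk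
      have habs : K₀ ≤ |k| := by
        rcases le_or_gt 0 k with h0 | h0
        · rw [abs_of_nonneg h0]; omega
        · rw [abs_of_neg h0]; omega
      rw [if_pos habs]
  exact (Summable.of_nonneg_of_le (fun k => abs_nonneg _) hle hg).of_abs

noncomputable def TT (lam : ℤ → ℝ) (L' : ℝ) (a b : ℤ) : ℝ :=
  L' - ∑ k ∈ Finset.Ioo (-a) b, xx lam k

lemma exists_L' (lam : ℤ → ℝ) (hmono : StrictMono lam) (hpos : 0 ≤ lam 0)
    (hneg : lam (-1) < 0) (K₀ : ℤ) (hK2 : 2 ≤ K₀)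
    (hK : ∀ k : ℤ, K₀ ≤ |k| → (|(k:ℝ)| ≤ |lam k| ∧ 2 * lam 0 + 1 ≤ |lam k|))
    (L : ℝ)
    (hL : Tendsto (fun N : ℕ =>
      ∑ n ∈ Finset.Ioo (-(N:ℤ)) (N:ℤ), lam n / (1 + lam n ^ 2)) atTop (𝓝 L)) :
    ∃ L', Tendsto (fun N : ℕ => ∑ k ∈ Finset.Ioo (-(N:ℤ)) (N:ℤ), xx lam k) atTop (𝓝 L') := by
  have hdd := summable_dd lam hmono hpos hneg K₀ hK2 hK
  have h2 : Tendsto (fun N : ℕ => ∑ k ∈ Finset.Ioo (-(N:ℤ)) (N:ℤ), xx lam k / (1 + lam k ^ 2))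
      atTop (𝓝 (∑' k : ℤ, xx lam k / (1 + lam k ^ 2))) := hdd.hasSum.comp tendsto_Ioo_finset
  refine ⟨L + ∑' k : ℤ, xx lam k / (1 + lam k ^ 2), ?_⟩
  apply (hL.add h2).congr
  intro N
  rw [← Finset.sum_add_distrib]
  apply Finset.sum_congr rfl
  intro k _
  by_cases h : lam k = 0
  · simp [xx, h]
  · have h1 : (1:ℝ) + lam k ^ 2 ≠ 0 := by positivity
    rw [xx, if_neg h]
    field_simp
    ring

lemma exists_good (lam : ℤ → ℝ) (hmono : StrictMono lam)
    (htop : Tendsto lam atTop atTop) (hbot : Tendsto lam atBot atBot)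
    (hneg : lam (-1) < 0) (hpos : 0 ≤ lam 0) (K₀ : ℤ) (hK2 : 2 ≤ K₀)
    (L' : ℝ)
    (hL' : Tendsto (fun N : ℕ => ∑ k ∈ Finset.Ioo (-(N:ℤ)) (N:ℤ), xx lam k) atTop (𝓝 L'))
    (J : ℤ) (hJ : K₀ + 1 ≤ J) :
    ∃ a b : ℤ, J ≤ a ∧ J ≤ b ∧ 0 < TT lam L' a b ∧ TT lam L' a b ≤ |lam (-a+1)|⁻¹ := by
  classical
  have hTNN : Tendsto (fun N : ℕ => TT lam L' N N) atTop (𝓝 0) := by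
    have := (tendsto_const_nhds (x := L') (f := atTop)).sub hL'
    simpa [TT] using this
  have hxJneg : xx lam (-J) < 0 := by
    rw [xx_eq hmono hpos hneg (by omega)]
    exact inv_neg''.mpr (lam_neg hmono hneg (by omega))
  -- Step α : find b with TT J b ≤ 0
  have hstepA : ∀ N : ℕ, J + 1 ≤ (N:ℤ) → TT lam L' J N ≤ TT lam L' N N + xx lam (-J) := by
    intro N hN
    have hsub : Finset.Ioo (-J) (N:ℤ) ⊆ Finset.Ioo (-(N:ℤ)) (N:ℤ) := by
      apply Finset.Ioo_subset_Ioo (by omega) le_rfl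
    have hdiff : TT lam L' J N - TT lam L' N N
        = ∑ k ∈ Finset.Ioo (-(N:ℤ)) (N:ℤ) \ Finset.Ioo (-J) (N:ℤ), xx lam k := by
      rw [TT, TT, Finset.sum_sdiff_eq_sub hsub]
      ring
    have hmem : -J ∈ Finset.Ioo (-(N:ℤ)) (N:ℤ) \ Finset.Ioo (-J) (N:ℤ) := by
      simp only [Finset.mem_sdiff, Finset.mem_Ioo]
      omega
    have hbound : ∑ k ∈ Finset.Ioo (-(N:ℤ)) (N:ℤ) \ Finset.Ioo (-J) (N:ℤ), xx lam k
        ≤ xx lam (-J) := by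
      rw [← Finset.add_sum_erase _ _ hmem]
      have : ∑ k ∈ (Finset.Ioo (-(N:ℤ)) (N:ℤ) \ Finset.Ioo (-J) (N:ℤ)).erase (-J),
          xx lam k ≤ 0 := by
        apply Finset.sum_nonpos
        intro k hk
        simp only [Finset.mem_erase, Finset.mem_sdiff, Finset.mem_Ioo] at hk
        have hk1 : k ≤ -1 := by omega
        rw [xx_eq hmono hpos hneg (by omega)]
        exact le_of_lt (inv_neg''.mpr (lam_neg hmono hneg hk1))
      linarith
    linarith
  obtain ⟨N₀, hN₀⟩ : ∃ N : ℕ, (J + 1 ≤ (N:ℤ) ∧ TT lam L' N N < -xx lam (-J)) := by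
    have h1 : ∀ᶠ N : ℕ in atTop, J + 1 ≤ (N:ℤ) :=
      tendsto_natCast_atTop_atTop.eventually_ge_atTop (J+1)
    have h2 : ∀ᶠ N : ℕ in atTop, TT lam L' N N < -xx lam (-J) :=
      hTNN.eventually (gt_mem_nhds (by linarith))
    exact (h1.and h2).exists
  set b : ℤ := (N₀ : ℤ) with hbdef
  have hbJ : J + 1 ≤ b := hN₀.1
  have hTb : TT lam L' J b ≤ 0 := by
    have := hstepA N₀ hN₀.1
    linarith
  have hxb : 0 < xx lam b := by
    rw [xx_eq hmono hpos hneg (by omega)]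
    exact inv_pos.mpr (lam_pos hmono hpos (by omega))
  -- Step β : adjust a
  have habs_pos : ∀ m : ℤ, m ≤ -1 → 0 < |lam m| := by
    intro m hm
    exact abs_pos.mpr (ne_of_lt (lam_neg hmono hneg hm))
  set P : ℤ → Prop := fun M => TT lam L' M b ≤ |lam (-M+1)|⁻¹ with hPdef
  have hPJ : P J := by
    apply le_of_lt (lt_of_le_of_lt hTb _)
    exact inv_pos.mpr (habs_pos _ (by omega))
  -- failure of P for large M
  have hstepB : ∀ N : ℕ, b + 1 ≤ (N:ℤ) → TT lam L' N N + xx lam b ≤ TT lam L' N b := by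
    intro N hN
    have hsub : Finset.Ioo (-(N:ℤ)) b ⊆ Finset.Ioo (-(N:ℤ)) (N:ℤ) := by
      apply Finset.Ioo_subset_Ioo le_rfl (by omega)
    have hdiff : TT lam L' N b - TT lam L' N N
        = ∑ k ∈ Finset.Ioo (-(N:ℤ)) (N:ℤ) \ Finset.Ioo (-(N:ℤ)) b, xx lam k := by
      rw [TT, TT, Finset.sum_sdiff_eq_sub hsub]
      ring
    have hmem : b ∈ Finset.Ioo (-(N:ℤ)) (N:ℤ) \ Finset.Ioo (-(N:ℤ)) b := by
      simp only [Finset.mem_sdiff, Finset.mem_Ioo]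
      omega
    have hbound : xx lam b ≤ ∑ k ∈ Finset.Ioo (-(N:ℤ)) (N:ℤ) \ Finset.Ioo (-(N:ℤ)) b,
        xx lam k := by
      rw [← Finset.add_sum_erase _ _ hmem]
      have : 0 ≤ ∑ k ∈ (Finset.Ioo (-(N:ℤ)) (N:ℤ) \ Finset.Ioo (-(N:ℤ)) b).erase b,
          xx lam k := by
        apply Finset.sum_nonneg
        intro k hk
        simp only [Finset.mem_erase, Finset.mem_sdiff, Finset.mem_Ioo] at hk
        have hk1 : 1 ≤ k := by omega
        rw [xx_eq hmono hpos hneg (by omega)]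
        exact le_of_lt (inv_pos.mpr (lam_pos hmono hpos hk1))
      linarith
    linarith
  have hinvbot : Tendsto (fun N : ℕ => |lam (-(N:ℤ)+1)|⁻¹) atTop (𝓝 0) := by
    apply Tendsto.inv_tendsto_atTop
    apply (tendsto_abs_atBot_atTop).comp
    apply hbot.comp
    apply tendsto_atBot_add_const_right
    exact tendsto_neg_atBot_iff.mpr tendsto_natCast_atTop_atTop
  obtain ⟨N₁, hN₁⟩ : ∃ N : ℕ, b + 1 ≤ (N:ℤ) ∧ J ≤ (N:ℤ) ∧ -(xx lam b)/2 < TT lam L' N N ∧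
      |lam (-(N:ℤ)+1)|⁻¹ < xx lam b / 2 := by
    have h1 : ∀ᶠ N : ℕ in atTop, b + 1 ≤ (N:ℤ) :=
      tendsto_natCast_atTop_atTop.eventually_ge_atTop (b+1)
    have h1' : ∀ᶠ N : ℕ in atTop, J ≤ (N:ℤ) :=
      tendsto_natCast_atTop_atTop.eventually_ge_atTop J
    have h2 : ∀ᶠ N : ℕ in atTop, -(xx lam b)/2 < TT lam L' N N :=
      hTNN.eventually (lt_mem_nhds (by linarith))
    have h3 : ∀ᶠ N : ℕ in atTop, |lam (-(N:ℤ)+1)|⁻¹ < xx lam b / 2 :=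
      hinvbot.eventually (gt_mem_nhds (by linarith))
    obtain ⟨N, hN⟩ := ((h1.and h1').and (h2.and h3)).exists
    exact ⟨N, hN.1.1, hN.1.2, hN.2.1, hN.2.2⟩
  have hnotP : ¬ P (N₁ : ℤ) := by
    rw [hPdef]
    push_neg
    have := hstepB N₁ hN₁.1
    rcases hN₁ with ⟨hA, hB, hC, hD⟩
    linarith
  -- Nat.find for least failure
  have hex : ∃ m : ℕ, ¬ P (J + (m:ℤ)) := by
    refine ⟨((N₁:ℤ) - J).toNat, ?_⟩
    have : J + (((N₁:ℤ) - J).toNat : ℤ) = (N₁:ℤ) := by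
      rw [Int.toNat_of_nonneg (by omega)]; ring
    rw [this]
    exact hnotP
  set mf := Nat.find hex with hmf
  have hmf0 : mf ≠ 0 := by
    intro h
    have := Nat.find_spec hex
    rw [hmf] at h  
    rw [h] at this
    simp only [Nat.cast_zero, add_zero] at this
    exact this hPJ
  have hprev : P (J + ((mf - 1 : ℕ) : ℤ)) := by
    by_contra hcon
    exact Nat.find_min hex (by omega) hcon
  set a : ℤ := J + ((mf - 1 : ℕ) : ℤ) with hadef
  have hnotPa : ¬ P (a + 1) := by
    have h1 : a + 1 = J + (mf : ℤ) := by
      rw [hadef]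
      have : ((mf - 1 : ℕ) : ℤ) = (mf : ℤ) - 1 := by omega
      rw [this]; ring
    rw [h1]
    exact Nat.find_spec hex
  have hins : TT lam L' (a+1) b = TT lam L' a b - xx lam (-a) := by
    have hIoo : Finset.Ioo (-(a+1)) b = insert (-a) (Finset.Ioo (-a) b) := by
      ext k
      simp only [Finset.mem_insert, Finset.mem_Ioo]
      omega
    rw [TT, TT, hIoo, Finset.sum_insert (by simp only [Finset.mem_Ioo]; omega)]
    ring
  have hxa : xx lam (-a) < 0 := by
    rw [xx_eq hmono hpos hneg (by omega)]
    exact inv_neg''.mpr (lam_neg hmono hneg (by omega))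
  have habsxa : -xx lam (-a) = |lam (-a)|⁻¹ := by
    rw [xx_eq hmono hpos hneg (by omega), ← inv_neg, abs_of_neg (lam_neg hmono hneg (by omega))]
  refine ⟨a, b, by omega, by omega, ?_, ?_⟩
  · rw [hPdef] at hnotPa
    push_neg at hnotPa
    rw [hins] at hnotPa
    have : |lam (-(a+1)+1)|⁻¹ = |lam (-a)|⁻¹ := by norm_num
    rw [this] at hnotPa
    linarith [hnotPa, habsxa]
  · exact hprev


lemma tt_decomp (lam : ℤ → ℝ) {n k : ℤ} (hc : lam k ≠ 0) (hu : 0 < 1 - lam n / lam k) :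
    tt lam n k = Real.log (1 + ((lam k)⁻¹)^2) - 2 * Real.log (1 - lam n / lam k) := by
  have hu2 : (1 - lam n / lam k) ≠ 0 := ne_of_gt hu
  have hiden : (1 + lam k ^ 2) / (lam k - lam n) ^ 2
      = (1 + ((lam k)⁻¹)^2) / (1 - lam n / lam k) ^ 2 := by
    field_simp
    ring
  rw [tt, hiden, Real.log_div (by positivity) (by positivity), Real.log_pow]
  push_cast
  ring

lemma ulam_pos (lam : ℤ → ℝ) (hmono : StrictMono lam) (hpos : 0 ≤ lam 0) (hneg : lam (-1) < 0)
    {a b n k : ℤ} (ha : 1 ≤ a) (hb : 1 ≤ b)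
    (hn : n ∈ Finset.Ioo (-a) b) (hk : k ∉ Finset.Ioo (-a) b) :
    lam k ≠ 0 ∧ 0 < 1 - lam n / lam k := by
  rw [Finset.mem_Ioo] at hn
  have hcase : b ≤ k ∨ k ≤ -a := by
    by_contra hcc
    push_neg at hcc
    exact hk (Finset.mem_Ioo.mpr ⟨by omega, by omega⟩)
  rcases hcase with h | h
  · have hc : 0 < lam k := lam_pos hmono hpos (by omega)
    have hd : lam n < lam k := hmono (by omega)
    refine ⟨ne_of_gt hc, ?_⟩
    have : lam n / lam k < 1 := (div_lt_one hc).mpr hd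
    linarith
  · have hc : lam k < 0 := lam_neg hmono hneg (by omega)
    have hd : lam k < lam n := hmono (by omega)
    refine ⟨ne_of_lt hc, ?_⟩
    have h2 : lam n / lam k - 1 = (lam n - lam k)/ lam k := div_sub_one (ne_of_lt hc)
    have h3 : (lam n - lam k) / lam k < 0 := div_neg_of_pos_of_neg (by linarith) hc
    linarith

lemma term_nonneg (lam : ℤ → ℝ) (hmono : StrictMono lam) (hpos : 0 ≤ lam 0) (hneg : lam (-1) < 0)
    {a b n k : ℤ} (ha : 1 ≤ a) (hb : 1 ≤ b)
    (hn : n ∈ Finset.Ioo (-a) b) (hk : k ∉ Finset.Ioo (-a) b) :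
    2 * lam n * xx lam k ≤ tt lam n k := by
  obtain ⟨hc0, hu⟩ := ulam_pos lam hmono hpos hneg ha hb hn hk
  have hk0 : k ≠ 0 := fun h => hk (Finset.mem_Ioo.mpr ⟨by omega, by omega⟩)
  rw [tt_decomp lam hc0 hu, xx, if_neg hc0]
  have h1 : 0 ≤ Real.log (1 + ((lam k)⁻¹)^2) :=
    Real.log_nonneg (le_add_of_nonneg_right (by positivity))
  have h2 : Real.log (1 - lam n / lam k) ≤ (1 - lam n / lam k) - 1 :=
    Real.log_le_sub_one_of_pos hu
  have h3 : 2 * lam n * (lam k)⁻¹ = 2 * (lam n / lam k) := by ring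
  linarith

lemma term_upper (lam : ℤ → ℝ) (hmono : StrictMono lam) (hpos : 0 ≤ lam 0) (hneg : lam (-1) < 0)
    {a b k : ℤ} (ha : 1 ≤ a) (hb : 1 ≤ b)
    (hn : (0:ℤ) ∈ Finset.Ioo (-a) b) (hk : k ∉ Finset.Ioo (-a) b)
    (hck : |(k:ℝ)| ≤ |lam k|) (hc2 : 2 * lam 0 + 1 ≤ |lam k|) :
    tt lam 0 k - 2 * lam 0 * xx lam k ≤ (1 + 4 * lam 0 ^ 2) * ((k:ℝ)^2)⁻¹ := by
  obtain ⟨hc0, hu⟩ := ulam_pos lam hmono hpos hneg ha hb hn hk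
  have hk0 : k ≠ 0 := fun h => hk (Finset.mem_Ioo.mpr ⟨by omega, by omega⟩)
  set x := lam 0 / lam k with hx
  have habs : 0 < |lam k| := abs_pos.mpr hc0
  have hxle : |x| ≤ 1/2 := by
    rw [hx, abs_div]
    rw [div_le_iff₀ habs]
    rw [abs_of_nonneg hpos]
    nlinarith
  have hxhalf : x ≤ 1/2 := le_trans (le_abs_self x) hxle
  -- lower bound for log (1 - x)
  have hlogu : -(x + 2*x^2) ≤ Real.log (1 - x) := by
    have hexp : (1:ℝ) ≤ Real.exp (x + 2*x^2) * (1 - x) := by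
      have he1 : (x + 2*x^2) + 1 ≤ Real.exp (x + 2*x^2) := Real.add_one_le_exp _
      have he2 : (1 + (x + 2*x^2)) * (1 - x) = 1 + x^2 * (1 - 2*x) := by ring
      have he3 : (0:ℝ) ≤ x^2 * (1 - 2*x) := by nlinarith
      have he4 : (0:ℝ) ≤ 1 - x := le_of_lt hu
      nlinarith [Real.exp_pos (x + 2*x^2)]
    have h5 : (0:ℝ) ≤ Real.log (Real.exp (x + 2*x^2) * (1 - x)) := Real.log_nonneg hexp
    rw [Real.log_mul (Real.exp_ne_zero _) (ne_of_gt hu), Real.log_exp] at h5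
    linarith
  have hloga : Real.log (1 + ((lam k)⁻¹)^2) ≤ ((lam k)⁻¹)^2 := by
    have := Real.log_le_sub_one_of_pos (show (0:ℝ) < 1 + ((lam k)⁻¹)^2 by positivity)
    linarith
  rw [tt_decomp lam hc0 hu, xx, if_neg hc0]
  have h3 : 2 * lam 0 * (lam k)⁻¹ = 2 * x := by rw [hx]; field_simp
  have hc2' : ((k:ℝ)^2)⁻¹ ≥ ((lam k)^2)⁻¹ := by
    apply inv_anti₀ (by positivity)
    calc (k:ℝ)^2 = |(k:ℝ)|^2 := (sq_abs _).symm
    _ ≤ |lam k|^2 := by nlinarith [abs_nonneg ((k:ℝ))]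
    _ = (lam k)^2 := sq_abs _
  have hx2 : x^2 ≤ lam 0 ^2 * ((k:ℝ)^2)⁻¹ := by
    have : x^2 = lam 0 ^2 * ((lam k)^2)⁻¹ := by rw [hx]; field_simp
    rw [this]
    apply mul_le_mul_of_nonneg_left hc2' (by positivity)
  have hik : ((lam k)⁻¹)^2 ≤ ((k:ℝ)^2)⁻¹ := by
    rw [inv_pow]
    exact hc2'
  nlinarith

lemma tendsto_tail (lam : ℤ → ℝ) {n a b : ℤ} (hn : n ∈ Finset.Ioo (-a) b) (Sn : ℝ)
    (hSn : Tendsto (fun N : ℕ =>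
      ∑ k ∈ (Finset.Ioo (n - (N:ℤ)) (n + (N:ℤ))).erase n, tt lam n k) atTop (𝓝 Sn)) :
    Tendsto (fun N : ℕ => ∑ k ∈ Finset.Ioo (n - (N:ℤ)) (n + (N:ℤ)) \ Finset.Ioo (-a) b,
      tt lam n k) atTop
      (𝓝 (Sn - ∑ k ∈ (Finset.Ioo (-a) b).erase n, tt lam n k)) := by
  apply Tendsto.congr' _ (hSn.sub_const _)
  have h1 : ∀ᶠ N : ℕ in atTop, n + a ≤ (N:ℤ) :=
    tendsto_natCast_atTop_atTop.eventually_ge_atTop (n + a)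
  have h2 : ∀ᶠ N : ℕ in atTop, b - n ≤ (N:ℤ) :=
    tendsto_natCast_atTop_atTop.eventually_ge_atTop (b - n)
  filter_upwards [h1, h2] with N hNa hNb
  have hsub : Finset.Ioo (-a) b ⊆ Finset.Ioo (n - (N:ℤ)) (n + (N:ℤ)) :=
    Finset.Ioo_subset_Ioo (by omega) (by omega)
  have hsub2 : (Finset.Ioo (-a) b).erase n ⊆ (Finset.Ioo (n - (N:ℤ)) (n + (N:ℤ))).erase n :=
    Finset.erase_subset_erase _ hsub
  have hset : (Finset.Ioo (n - (N:ℤ)) (n + (N:ℤ))).erase n \ (Finset.Ioo (-a) b).erase n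
      = Finset.Ioo (n - (N:ℤ)) (n + (N:ℤ)) \ Finset.Ioo (-a) b := by
    ext k
    simp only [Finset.mem_sdiff, Finset.mem_erase]
    constructor
    · rintro ⟨⟨hkn, hkw⟩, hknF⟩
      exact ⟨hkw, fun hkF => hknF ⟨hkn, hkF⟩⟩
    · rintro ⟨hkw, hkF⟩
      have hkn : k ≠ n := fun h => hkF (h ▸ hn)
      exact ⟨⟨hkn, hkw⟩, fun hc => hkF hc.2⟩
  rw [← hset, Finset.sum_sdiff_eq_sub hsub2]

lemma shift_tendsto (lam : ℤ → ℝ) (hmono : StrictMono lam) (hpos : 0 ≤ lam 0)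
    (hneg : lam (-1) < 0) (K₀ : ℤ) (hK2 : 2 ≤ K₀)
    (hK : ∀ k : ℤ, K₀ ≤ |k| → (|(k:ℝ)| ≤ |lam k| ∧ 2 * lam 0 + 1 ≤ |lam k|))
    (L' : ℝ)
    (hL' : Tendsto (fun N : ℕ => ∑ k ∈ Finset.Ioo (-(N:ℤ)) (N:ℤ), xx lam k) atTop (𝓝 L'))
    (a b n : ℤ) (haK : K₀ ≤ a) (hbK : K₀ ≤ b) :
    Tendsto (fun N : ℕ => ∑ k ∈ Finset.Ioo (n - (N:ℤ)) (n + (N:ℤ)) \ Finset.Ioo (-a) b,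
      xx lam k) atTop (𝓝 (TT lam L' a b)) := by
  have hbase : Tendsto (fun N : ℕ => ∑ k ∈ Finset.Ioo (-(N:ℤ)) (N:ℤ) \ Finset.Ioo (-a) b,
      xx lam k) atTop (𝓝 (TT lam L' a b)) := by
    apply Tendsto.congr' _ (hL'.sub_const _)
    have h1 : ∀ᶠ N : ℕ in atTop, a ≤ (N:ℤ) := tendsto_natCast_atTop_atTop.eventually_ge_atTop a
    have h2 : ∀ᶠ N : ℕ in atTop, b ≤ (N:ℤ) := tendsto_natCast_atTop_atTop.eventually_ge_atTop b
    filter_upwards [h1, h2] with N hNa hNb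
    have hsub : Finset.Ioo (-a) b ⊆ Finset.Ioo (-(N:ℤ)) (N:ℤ) :=
      Finset.Ioo_subset_Ioo (by omega) (by omega)
    rw [Finset.sum_sdiff_eq_sub hsub]
  have hdiff : Tendsto (fun N : ℕ =>
      (∑ k ∈ Finset.Ioo (n - (N:ℤ)) (n + (N:ℤ)) \ Finset.Ioo (-a) b, xx lam k)
      - ∑ k ∈ Finset.Ioo (-(N:ℤ)) (N:ℤ) \ Finset.Ioo (-a) b, xx lam k) atTop (𝓝 0) := by
    have hg : Tendsto (fun N : ℕ => 2 * (n.natAbs:ℝ) * (((N:ℝ) - (n.natAbs:ℝ))⁻¹))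
        atTop (𝓝 0) := by
      have h1 : Tendsto (fun N : ℕ => (N:ℝ) - (n.natAbs:ℝ)) atTop atTop :=
        tendsto_atTop_add_const_right _ _ tendsto_natCast_atTop_atTop
      have h2 := h1.inv_tendsto_atTop
      have := h2.const_mul (2 * (n.natAbs:ℝ))
      simpa using this
    apply squeeze_zero_norm' _ hg
    have hcond : ∀ᶠ N : ℕ in atTop, (n.natAbs : ℤ) + K₀ + a + b ≤ (N:ℤ) :=
      tendsto_natCast_atTop_atTop.eventually_ge_atTop _
    filter_upwards [hcond] with N hN
    set A := Finset.Ioo (n - (N:ℤ)) (n + (N:ℤ)) with hA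
    set B := Finset.Ioo (-(N:ℤ)) (N:ℤ) with hB
    set F := Finset.Ioo (-a) b with hF
    have hinter : (A \ F) ∩ B = (B \ F) ∩ A := by
      ext k
      simp only [Finset.mem_inter, Finset.mem_sdiff]
      tauto
    have hsplit1 := Finset.sum_inter_add_sum_sdiff (A \ F) B (xx lam)
    have hsplit2 := Finset.sum_inter_add_sum_sdiff (B \ F) A (xx lam)
    have hd : (∑ k ∈ A \ F, xx lam k) - ∑ k ∈ B \ F, xx lam k
        = (∑ k ∈ (A \ F) \ B, xx lam k) - ∑ k ∈ (B \ F) \ A, xx lam k := by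
      rw [← hsplit1, ← hsplit2, hinter]
      ring
    have hbound : ∀ (E : Finset ℤ), (∀ k ∈ E, ((N:ℤ) - n.natAbs ≤ |k|)) →
        |∑ k ∈ E, xx lam k| ≤ (E.card : ℝ) * (((N:ℝ) - (n.natAbs:ℝ))⁻¹) := by
      intro E hE
      calc |∑ k ∈ E, xx lam k| ≤ ∑ k ∈ E, |xx lam k| := Finset.abs_sum_le_sum_abs _ _
      _ ≤ E.card • (((N:ℝ) - (n.natAbs:ℝ))⁻¹) := by
          apply Finset.sum_le_card_nsmul
          intro k hk
          have hkabs := hE k hk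
          have hkK : K₀ ≤ |k| := by omega
          have hk0 : k ≠ 0 := by
            intro h
            rw [h] at hkK
            simp at hkK
            omega
          apply abs_xx_le hmono hpos hneg hk0 _ _
          · have : (0:ℤ) < (N:ℤ) - n.natAbs := by omega
            exact_mod_cast lt_of_lt_of_le (by exact_mod_cast this) le_rfl
          · calc ((N:ℝ) - (n.natAbs:ℝ)) ≤ (|k|:ℤ) := by exact_mod_cast hkabs
            _ = |(k:ℝ)| := by push_cast; rfl
            _ ≤ |lam k| := (hK k hkK).1
      _ = (E.card : ℝ) * (((N:ℝ) - (n.natAbs:ℝ))⁻¹) := by rw [nsmul_eq_mul]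
    have hsub1 : (A \ F) \ B ⊆ Finset.Ico (N:ℤ) (n + N) ∪ Finset.Ioc (n - (N:ℤ)) (-(N:ℤ)) := by
      intro k hk
      simp only [hA, hB, hF, Finset.mem_sdiff, Finset.mem_Ioo] at hk
      simp only [Finset.mem_union, Finset.mem_Ico, Finset.mem_Ioc]
      omega
    have hsub2 : (B \ F) \ A ⊆ Finset.Ico (n + (N:ℤ)) (N:ℤ) ∪ Finset.Ioc (-(N:ℤ)) (n - N) := by
      intro k hk
      simp only [hA, hB, hF, Finset.mem_sdiff, Finset.mem_Ioo] at hk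
      simp only [Finset.mem_union, Finset.mem_Ico, Finset.mem_Ioc]
      omega
    have hcard1 : (((A \ F) \ B).card : ℝ) ≤ (n.natAbs : ℝ) := by
      have := Finset.card_le_card hsub1
      have h2 := Finset.card_union_le (Finset.Ico (N:ℤ) (n + N)) (Finset.Ioc (n - (N:ℤ)) (-(N:ℤ)))
      rw [Int.card_Ico, Int.card_Ioc] at h2
      have : ((A \ F) \ B).card ≤ n.natAbs := by omega
      exact_mod_cast this
    have hcard2 : (((B \ F) \ A).card : ℝ) ≤ (n.natAbs : ℝ) := by
      have := Finset.card_le_card hsub2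
      have h2 := Finset.card_union_le (Finset.Ico (n + (N:ℤ)) (N:ℤ)) (Finset.Ioc (-(N:ℤ)) (n - N))
      rw [Int.card_Ico, Int.card_Ioc] at h2
      have : ((B \ F) \ A).card ≤ n.natAbs := by omega
      exact_mod_cast this
    have hmem1 : ∀ k ∈ (A \ F) \ B, ((N:ℤ) - n.natAbs ≤ |k|) := by
      intro k hk
      simp only [hA, hB, hF, Finset.mem_sdiff, Finset.mem_Ioo] at hk
      rcases le_or_gt 0 k with h0 | h0
      · rw [abs_of_nonneg h0]; omega
      · rw [abs_of_neg h0]; omega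
    have hmem2 : ∀ k ∈ (B \ F) \ A, ((N:ℤ) - n.natAbs ≤ |k|) := by
      intro k hk
      simp only [hA, hB, hF, Finset.mem_sdiff, Finset.mem_Ioo] at hk
      rcases le_or_gt 0 k with h0 | h0
      · rw [abs_of_nonneg h0]; omega
      · rw [abs_of_neg h0]; omega
    have hb1 := hbound _ hmem1
    have hb2 := hbound _ hmem2
    have hinv_nonneg : (0:ℝ) ≤ ((N:ℝ) - (n.natAbs:ℝ))⁻¹ := by
      apply inv_nonneg.mpr
      have : (0:ℤ) ≤ (N:ℤ) - n.natAbs := by omega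
      exact_mod_cast this
    rw [Real.norm_eq_abs, hd]
    calc |(∑ k ∈ (A \ F) \ B, xx lam k) - ∑ k ∈ (B \ F) \ A, xx lam k|
        ≤ |∑ k ∈ (A \ F) \ B, xx lam k| + |∑ k ∈ (B \ F) \ A, xx lam k| := abs_sub _ _
    _ ≤ (n.natAbs : ℝ) * (((N:ℝ) - (n.natAbs:ℝ))⁻¹)
        + (n.natAbs : ℝ) * (((N:ℝ) - (n.natAbs:ℝ))⁻¹) := by
        apply add_le_add
        · exact le_trans hb1 (mul_le_mul_of_nonneg_right hcard1 hinv_nonneg)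
        · exact le_trans hb2 (mul_le_mul_of_nonneg_right hcard2 hinv_nonneg)
    _ = 2 * (n.natAbs:ℝ) * (((N:ℝ) - (n.natAbs:ℝ))⁻¹) := by ring
  have := hbase.add hdiff
  rw [add_zero] at this
  apply this.congr
  intro N
  ring

lemma D_lower (lam : ℤ → ℝ) (hmono : StrictMono lam) (hpos : 0 ≤ lam 0)
    (hneg : lam (-1) < 0) (K₀ : ℤ) (hK2 : 2 ≤ K₀)
    (hK : ∀ k : ℤ, K₀ ≤ |k| → (|(k:ℝ)| ≤ |lam k| ∧ 2 * lam 0 + 1 ≤ |lam k|))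
    (L' : ℝ)
    (hL' : Tendsto (fun N : ℕ => ∑ k ∈ Finset.Ioo (-(N:ℤ)) (N:ℤ), xx lam k) atTop (𝓝 L'))
    {a b n : ℤ} (haK : K₀ ≤ a) (hbK : K₀ ≤ b) (hn : n ∈ Finset.Ioo (-a) b) (Sn : ℝ)
    (hSn : Tendsto (fun N : ℕ =>
      ∑ k ∈ (Finset.Ioo (n - (N:ℤ)) (n + (N:ℤ))).erase n, tt lam n k) atTop (𝓝 Sn)) :
    2 * lam n * TT lam L' a b ≤ Sn - ∑ k ∈ (Finset.Ioo (-a) b).erase n, tt lam n k := by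
  have h1 := tendsto_tail lam hn Sn hSn
  have h2 := (shift_tendsto lam hmono hpos hneg K₀ hK2 hK L' hL' a b n haK hbK).const_mul
    (2 * lam n)
  have h3 := h1.sub h2
  have h4 : 2 * lam n * TT lam L' a b
      ≤ (Sn - ∑ k ∈ (Finset.Ioo (-a) b).erase n, tt lam n k) - 2 * lam n * TT lam L' a b
      + 2 * lam n * TT lam L' a b := by
    have h5 : 0 ≤ (Sn - ∑ k ∈ (Finset.Ioo (-a) b).erase n, tt lam n k)
        - 2 * lam n * TT lam L' a b := by
      apply ge_of_tendsto h3
      filter_upwards with N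
      rw [Finset.mul_sum, ← Finset.sum_sub_distrib]
      apply Finset.sum_nonneg
      intro k hk
      have hkF : k ∉ Finset.Ioo (-a) b := (Finset.mem_sdiff.mp hk).2
      have := term_nonneg lam hmono hpos hneg (by omega) (by omega) hn hkF
      linarith
    linarith
  linarith

lemma D_upper (lam : ℤ → ℝ) (hmono : StrictMono lam) (hpos : 0 ≤ lam 0)
    (hneg : lam (-1) < 0) (K₀ : ℤ) (hK2 : 2 ≤ K₀)
    (hK : ∀ k : ℤ, K₀ ≤ |k| → (|(k:ℝ)| ≤ |lam k| ∧ 2 * lam 0 + 1 ≤ |lam k|))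
    (L' : ℝ)
    (hL' : Tendsto (fun N : ℕ => ∑ k ∈ Finset.Ioo (-(N:ℤ)) (N:ℤ), xx lam k) atTop (𝓝 L'))
    {a b : ℤ} (haK : K₀ ≤ a) (hbK : K₀ ≤ b) (Sn : ℝ)
    (hSn : Tendsto (fun N : ℕ =>
      ∑ k ∈ (Finset.Ioo (0 - (N:ℤ)) (0 + (N:ℤ))).erase 0, tt lam 0 k) atTop (𝓝 Sn)) :
    Sn - ∑ k ∈ (Finset.Ioo (-a) b).erase 0, tt lam 0 k
      ≤ 2 * lam 0 * TT lam L' a b + ∑' k : ℤ, (1 + 4 * lam 0 ^ 2) * ((k:ℝ)^2)⁻¹ := by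
  have hn : (0:ℤ) ∈ Finset.Ioo (-a) b := by
    simp only [Finset.mem_Ioo]
    omega
  have hsummable : Summable (fun k : ℤ => (1 + 4 * lam 0 ^ 2) * ((k:ℝ)^2)⁻¹) :=
    summable_int_rpow2.mul_left _
  have h1 := tendsto_tail lam hn Sn hSn
  have h2 := (shift_tendsto lam hmono hpos hneg K₀ hK2 hK L' hL' a b 0 haK hbK).const_mul
    (2 * lam 0)
  have h3 := h1.sub h2
  have h5 : (Sn - ∑ k ∈ (Finset.Ioo (-a) b).erase 0, tt lam 0 k)
      - 2 * lam 0 * TT lam L' a b ≤ ∑' k : ℤ, (1 + 4 * lam 0 ^ 2) * ((k:ℝ)^2)⁻¹ := by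
    apply le_of_tendsto h3
    filter_upwards with N
    rw [Finset.mul_sum, ← Finset.sum_sub_distrib]
    calc ∑ k ∈ Finset.Ioo (0 - (N:ℤ)) (0 + (N:ℤ)) \ Finset.Ioo (-a) b,
          (tt lam 0 k - 2 * lam 0 * xx lam k)
        ≤ ∑ k ∈ Finset.Ioo (0 - (N:ℤ)) (0 + (N:ℤ)) \ Finset.Ioo (-a) b,
          (1 + 4 * lam 0 ^ 2) * ((k:ℝ)^2)⁻¹ := by
          apply Finset.sum_le_sum
          intro k hk
          have hkF : k ∉ Finset.Ioo (-a) b := (Finset.mem_sdiff.mp hk).2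
          have hkabs : K₀ ≤ |k| := by
            have hor : b ≤ k ∨ k ≤ -a := by
              by_contra hcc
              push_neg at hcc
              exact hkF (Finset.mem_Ioo.mpr ⟨by omega, by omega⟩)
            rcases le_or_gt 0 k with h0 | h0
            · rw [abs_of_nonneg h0]; omega
            · rw [abs_of_neg h0]; omega
          obtain ⟨hck, hc2⟩ := hK k hkabs
          exact term_upper lam hmono hpos hneg (by omega) (by omega) hn hkF hck hc2
    _ ≤ ∑' k : ℤ, (1 + 4 * lam 0 ^ 2) * ((k:ℝ)^2)⁻¹ := by
          apply Summable.sum_le_tsum _ _ hsummable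
          intro k _
          positivity
  linarith

theorem neg_one_zpow_abs (i : ℤ) : |(-1:ℝ) ^ i| = 1 := by
  rcases Int.even_or_odd i with h | h
  · rw [h.neg_one_zpow]; norm_num
  · rw [h.neg_one_zpow]; norm_num

end Aux

/-- main theorem, sufficiency: if there is a balanced zero-density sequence
`Λ = {λₙ}` whose characteristic sequence `{pₙ}` satisfies `Σ W(λₙ) exp(pₙ) < ∞`, then
polynomials are not dense in `C_W`. -/
theorem not_polyDense_of_characteristic_sum_finite
    (W : ℝ → ℝ≥0∞) (hW : IsWeight W)
    (lam : ℤ → ℝ) (hmono : StrictMono lam)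
    (htop : Tendsto lam atTop atTop) (hbot : Tendsto lam atBot atBot)
    (hneg : lam (-1) < 0) (hpos : 0 ≤ lam 0)
    -- zero density
    (hdens : Tendsto (fun A : ℝ => ((Set.range lam ∩ Set.Ioo (-A) A).ncard : ℝ) / (2 * A))
      atTop (𝓝 0))
    -- balanced
    (hbal : ∃ L : ℝ, Tendsto (fun N : ℕ =>
        ∑ n ∈ Finset.Ioo (-(N : ℤ)) (N : ℤ), lam n / (1 + lam n ^ 2)) atTop (𝓝 L))
    -- characteristic sequence
    (p S : ℤ → ℝ)
    (hS : ∀ n : ℤ, Tendsto (fun N : ℕ =>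
        ∑ k ∈ (Finset.Ioo (n - (N : ℤ)) (n + (N : ℤ))).erase n,
          Real.log ((1 + lam k ^ 2) / (lam k - lam n) ^ 2)) atTop (𝓝 (S n)))
    (hp : ∀ n : ℤ, p n = (Real.log (1 + lam n ^ 2) + S n) / 2)
    -- Σ W(λₙ) exp(pₙ) < ∞
    (hsum : (∑' n : ℤ, W (lam n) * ENNReal.ofReal (Real.exp (p n))) < ⊤) :
    ¬ PolyDenseCW W := by
  intro hdense
  obtain ⟨K₀, hK2, hK⟩ := exists_K0 lam hmono htop hbot hneg hpos hdens
  obtain ⟨L, hL⟩ := hbal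
  obtain ⟨L', hL'⟩ := exists_L' lam hmono hpos hneg K₀ hK2 hK L hL
  have hStt : ∀ n : ℤ, Tendsto (fun N : ℕ =>
      ∑ k ∈ (Finset.Ioo (n - (N:ℤ)) (n + (N:ℤ))).erase n, tt lam n k) atTop (𝓝 (S n)) :=
    fun n => hS n
  -- finite weights
  have hWne : ∀ n : ℤ, W (lam n) ≠ ⊤ := by
    intro n h
    have h9 := ENNReal.le_tsum (f := fun n : ℤ => W (lam n) * ENNReal.ofReal (Real.exp (p n))) n
    rw [h, ENNReal.top_mul (by
      simp only [ne_eq, ENNReal.ofReal_eq_zero, not_le]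
      exact Real.exp_pos _)] at h9
    exact absurd (lt_of_le_of_lt h9 hsum) (lt_irrefl _)
  set w : ℤ → ℝ := fun n => (W (lam n)).toReal with hwdef
  have hwnn : ∀ n, 0 ≤ w n := fun n => ENNReal.toReal_nonneg
  have hsummw : Summable (fun n : ℤ => Real.exp (p n) * w n) := by
    have h8 : Summable (fun n : ℤ =>
        ((W (lam n) * ENNReal.ofReal (Real.exp (p n))).toReal)) :=
      ENNReal.summable_toReal (ne_of_lt hsum)
    apply h8.congr
    intro n
    rw [ENNReal.toReal_mul, ENNReal.toReal_ofReal (Real.exp_nonneg _), mul_comm]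
  set B : ℝ := ∑' n : ℤ, Real.exp (p n) * w n with hBdef
  have hBnn : 0 ≤ B := tsum_nonneg (fun n => mul_nonneg (Real.exp_nonneg _) (hwnn n))
  set Cb : ℝ := ∑' k : ℤ, (1 + 4 * lam 0 ^ 2) * ((k:ℝ)^2)⁻¹ with hCbdef
  set c : ℝ := Real.exp (p 0 - (Cb + 2 * lam 0)/2) with hcdef
  have hc : 0 < c := Real.exp_pos _
  -- the bump function
  have hgap1 : 0 < lam 1 - lam 0 := by have := hmono (show (0:ℤ) < 1 by norm_num); linarith
  have hgap2 : 0 < lam 0 - lam (-1) := by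
    have := hmono (show (-1:ℤ) < 0 by norm_num); linarith
  set δ : ℝ := min (lam 1 - lam 0) (lam 0 - lam (-1)) / 2 with hδdef
  have hδ : 0 < δ := by
    rw [hδdef]
    have := lt_min hgap1 hgap2
    positivity
  set f : ℝ → ℝ := fun x => max 0 (1 - |x - lam 0| / δ) with hfdef
  have hfc : Continuous f :=
    continuous_const.max (continuous_const.sub ((continuous_id.sub continuous_const).abs.div_const δ))
  have hf0 : f (lam 0) = 1 := by
    rw [hfdef]
    simp
  have hfsmall : ∀ x : ℝ, δ ≤ |x - lam 0| → f x = 0 := by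
    intro x hx
    rw [hfdef]
    simp only
    apply max_eq_left
    have h1 : 1 ≤ |x - lam 0| / δ := (one_le_div hδ).mpr hx
    linarith
  have hfn : ∀ n : ℤ, n ≠ 0 → f (lam n) = 0 := by
    intro n hn
    apply hfsmall
    rcases lt_or_gt_of_ne hn with h | h
    · have h1 : lam n ≤ lam (-1) := hmono.monotone (by omega)
      have h2 : 2 * δ ≤ lam 0 - lam (-1) := by
        rw [hδdef]
        have := min_le_right (lam 1 - lam 0) (lam 0 - lam (-1))
        linarith
      rw [abs_sub_comm, abs_of_nonneg (by linarith)]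
      linarith
    · have h1 : lam 1 ≤ lam n := hmono.monotone (by omega)
      have h2 : 2 * δ ≤ lam 1 - lam 0 := by
        rw [hδdef]
        have := min_le_left (lam 1 - lam 0) (lam 0 - lam (-1))
        linarith
      rw [abs_of_nonneg (by linarith)]
      linarith
  have hfCW : MemCW W f := by
    constructor
    · exact hfc
    · apply Tendsto.congr' _ (tendsto_const_nhds (x := (0:ℝ≥0∞)))
      apply Filter.eventuallyEq_of_mem (s := {x : ℝ | δ ≤ |x - lam 0|}) _
      · intro x hx
        simp only [Set.mem_setOf_eq] at hx
        simp [hfsmall x hx]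
      · rw [mem_sup]
        constructor
        · apply mem_atBot_sets.mpr
          refine ⟨lam 0 - δ, fun x hx => ?_⟩
          simp only [Set.mem_setOf_eq]
          rw [abs_sub_comm, abs_of_nonneg (by linarith)]
          linarith
        · apply mem_atTop_sets.mpr
          refine ⟨lam 0 + δ, fun x hx => ?_⟩
          simp only [Set.mem_setOf_eq]
          rw [abs_of_nonneg (by linarith)]
          linarith
  -- apply density
  set ε : ℝ := c / (2 * (Real.exp 1 * B + 1)) with hεdef
  have hεpos : 0 < ε := by
    rw [hεdef]
    have h1 : 0 < Real.exp 1 * B + 1 := by positivity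
    positivity
  obtain ⟨s, hs⟩ := hdense f hfCW ε hεpos
  -- good window
  set J : ℤ := max (K₀ + 1) ((s.natDegree : ℤ) + 2) with hJdef
  obtain ⟨a, b, haJ, hbJ, hT1, hT2⟩ := exists_good lam hmono htop hbot hneg hpos K₀ hK2
    L' hL' J (le_max_left _ _)
  have haK : K₀ ≤ a := by omega
  have hbK : K₀ ≤ b := by omega
  have hdegJ : (s.natDegree : ℤ) + 2 ≤ J := le_max_right _ _
  set F : Finset ℤ := Finset.Ioo (-a) b with hFdef
  have h0F : (0:ℤ) ∈ F := by
    rw [hFdef]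
    simp only [Finset.mem_Ioo]
    omega
  -- |lam (-a+1)| ≥ 1
  have habs1 : 1 ≤ |lam (-a+1)| := by
    have h1 : K₀ ≤ |(-a+1 : ℤ)| := by rw [abs_of_nonpos (by omega)]; omega
    have h2 := (hK _ h1).1
    have h3 : (K₀:ℝ) ≤ |((-a+1 : ℤ) : ℝ)| := by
      rw [abs_of_nonpos (by exact_mod_cast (show (-a+1:ℤ) ≤ 0 by omega))]
      push_cast
      have : (K₀ : ℝ) ≤ ((a:ℝ) - 1) := by exact_mod_cast (show K₀ ≤ a - 1 by omega)
      linarith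
    have h4 : (1:ℝ) ≤ (K₀:ℝ) := by exact_mod_cast (show (1:ℤ) ≤ K₀ by omega)
    linarith
  have hTle1 : TT lam L' a b ≤ 1 := by
    have h1 : |lam (-a+1)|⁻¹ ≤ 1 := by
      rw [inv_le_one_iff₀]
      right
      exact habs1
    linarith
  -- pF bounds
  have hpFle : ∀ n ∈ F, Real.exp (pF lam F n) ≤ Real.exp 1 * Real.exp (p n) := by
    intro n hnF
    have hD := D_lower lam hmono hpos hneg K₀ hK2 hK L' hL' haK hbK hnF (S n) (hStt n)
    have hlamT : -1 ≤ lam n * TT lam L' a b := by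
      rcases le_or_gt 0 (lam n) with h | h
      · have := mul_nonneg h (le_of_lt hT1)
        linarith
      · have hn1 : n ≤ -1 := by
          by_contra hcc
          push_neg at hcc
          have : 0 ≤ lam n := le_trans hpos (hmono.monotone (by omega))
          linarith
        have hnF' : -a < n := by
          rw [hFdef] at hnF
          exact (Finset.mem_Ioo.mp hnF).1
        have hmn : lam (-a+1) ≤ lam n := hmono.monotone (by omega)
        have hmn2 : lam (-a+1) * TT lam L' a b ≤ lam n * TT lam L' a b :=
          mul_le_mul_of_nonneg_right hmn (le_of_lt hT1)
        have hneg2 : lam (-a+1) < 0 := lam_neg hmono hneg (by omega)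
        have h5 : |lam (-a+1)| * TT lam L' a b ≤ |lam (-a+1)| * |lam (-a+1)|⁻¹ :=
          mul_le_mul_of_nonneg_left hT2 (abs_nonneg _)
        rw [mul_inv_cancel₀ (by positivity : |lam (-a+1)| ≠ 0)] at h5
        rw [abs_of_neg hneg2] at h5
        nlinarith
    have hpn : p n - pF lam F n = (S n - ∑ k ∈ F.erase n, tt lam n k) / 2 := by
      rw [hp n, pF]
      ring
    have hple : pF lam F n ≤ p n + 1 := by
      have : lam n * TT lam L' a b ≤ (S n - ∑ k ∈ F.erase n, tt lam n k) / 2 := by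
        rw [hFdef] at *
        linarith [hD]
      linarith [hpn, hlamT, this]
    calc Real.exp (pF lam F n) ≤ Real.exp (p n + 1) := Real.exp_le_exp.mpr hple
    _ = Real.exp 1 * Real.exp (p n) := by rw [← Real.exp_add]; ring_nf
  have hpF0 : c ≤ Real.exp (pF lam F 0) := by
    have hD := D_upper lam hmono hpos hneg K₀ hK2 hK L' hL' haK hbK (S 0) (hStt 0)
    have h2 : 2 * lam 0 * TT lam L' a b ≤ 2 * lam 0 := by
      nlinarith [hpos, hTle1, hT1]
    have hpn : p 0 - pF lam F 0 = (S 0 - ∑ k ∈ F.erase 0, tt lam 0 k) / 2 := by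
      rw [hp 0, pF]
      ring
    have hple : p 0 - (Cb + 2 * lam 0)/2 ≤ pF lam F 0 := by
      have h6 : S 0 - ∑ k ∈ F.erase 0, tt lam 0 k ≤ 2 * lam 0 + Cb := by
        rw [hFdef] at *
        linarith [hD]
      linarith [hpn]
    rw [hcdef]
    exact Real.exp_le_exp.mpr hple
  -- annihilation identity
  have hcard : s.natDegree + 2 ≤ F.card := by
    rw [hFdef, Int.card_Ioo]
    have h1 : (s.natDegree : ℤ) + 2 ≤ a := by omega
    have h2 : (s.natDegree : ℤ) + 2 ≤ b := by omega
    omega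
  have hkey := key_annihilation lam hmono a b s hcard
  -- f-sum evaluates to exp (pF 0)
  have hLf : ∑ i ∈ F, (-1:ℝ)^i * Real.exp (pF lam F i) * f (lam i)
      = Real.exp (pF lam F 0) := by
    rw [Finset.sum_eq_single 0]
    · rw [hf0, zpow_zero]
      ring
    · intro i _ hi
      rw [hfn i hi]
      ring
    · intro h
      exact absurd h0F h
  -- node bounds
  have hnode : ∀ i : ℤ, |f (lam i) - s.eval (lam i)| ≤ ε * w i := by
    intro i
    have h1 := hs (lam i)
    have hW' : W (lam i) = ENNReal.ofReal (w i) := (ENNReal.ofReal_toReal (hWne i)).symm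
    rw [hW', ← ENNReal.ofReal_mul (le_of_lt hεpos)] at h1
    exact (ENNReal.ofReal_le_ofReal_iff (mul_nonneg (le_of_lt hεpos) (hwnn i))).mp h1
  -- final chain
  have hchain : Real.exp (pF lam F 0) ≤ ε * (Real.exp 1 * B) := by
    have h6 : Real.exp (pF lam F 0)
        = |∑ i ∈ F, (-1:ℝ)^i * Real.exp (pF lam F i) * (f (lam i) - s.eval (lam i))| := by
      have h7 : ∑ i ∈ F, (-1:ℝ)^i * Real.exp (pF lam F i) * (f (lam i) - s.eval (lam i))
          = (∑ i ∈ F, (-1:ℝ)^i * Real.exp (pF lam F i) * f (lam i))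
            - ∑ i ∈ F, (-1:ℝ)^i * Real.exp (pF lam F i) * s.eval (lam i) := by
        rw [← Finset.sum_sub_distrib]
        apply Finset.sum_congr rfl
        intro i _
        ring
      have hkey' : ∑ i ∈ F, (-1:ℝ)^i * Real.exp (pF lam F i) * s.eval (lam i) = 0 := hkey
      rw [h7, hLf, hkey', sub_zero, abs_of_nonneg (Real.exp_nonneg _)]
    rw [h6]
    calc |∑ i ∈ F, (-1:ℝ)^i * Real.exp (pF lam F i) * (f (lam i) - s.eval (lam i))|
        ≤ ∑ i ∈ F, |(-1:ℝ)^i * Real.exp (pF lam F i) * (f (lam i) - s.eval (lam i))| :=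
          Finset.abs_sum_le_sum_abs _ _
    _ = ∑ i ∈ F, Real.exp (pF lam F i) * |f (lam i) - s.eval (lam i)| := by
        apply Finset.sum_congr rfl
        intro i _
        rw [abs_mul, abs_mul, neg_one_zpow_abs, one_mul,
          abs_of_nonneg (Real.exp_nonneg _)]
    _ ≤ ∑ i ∈ F, Real.exp (pF lam F i) * (ε * w i) := by
        apply Finset.sum_le_sum
        intro i _
        exact mul_le_mul_of_nonneg_left (hnode i) (Real.exp_nonneg _)
    _ ≤ ∑ i ∈ F, Real.exp 1 * Real.exp (p i) * (ε * w i) := by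
        apply Finset.sum_le_sum
        intro i hi
        apply mul_le_mul_of_nonneg_right (hpFle i hi)
        exact mul_nonneg (le_of_lt hεpos) (hwnn i)
    _ = ε * (Real.exp 1 * ∑ i ∈ F, Real.exp (p i) * w i) := by
        rw [Finset.mul_sum, Finset.mul_sum]
        apply Finset.sum_congr rfl
        intro i _
        ring
    _ ≤ ε * (Real.exp 1 * B) := by
        apply mul_le_mul_of_nonneg_left _ (le_of_lt hεpos)
        apply mul_le_mul_of_nonneg_left _ (Real.exp_nonneg 1)
        rw [hBdef]
        exact Summable.sum_le_tsum F (fun i _ => mul_nonneg (Real.exp_nonneg _) (hwnn i)) hsummw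
  have hfinal : c ≤ ε * (Real.exp 1 * B) := le_trans hpF0 hchain
  have hcontra : ε * (Real.exp 1 * B) < c := by
    rw [hεdef]
    rw [div_mul_eq_mul_div, div_lt_iff₀ (by positivity)]
    have hE : 0 ≤ Real.exp 1 * B := mul_nonneg (Real.exp_nonneg 1) hBnn
    nlinarith
  linarith
end
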